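/- arXiv:1503.01348 — 3 statements merged into one kernel-verified Lean document; each statement's English description precedes it below -/
import Mathlib

section
/- If G is a !-tensor expression (i.e., a !-pretensor expression satisfying conditions F1, F2, C1, C2 and C3) and A is a !-box name, then Drop_A(G) is again a !-tensor expression. -/
/-!
Shared infrastructure for !-tensor expressions (Kissinger & Quick,
"Tensors, !-graphs, and non-commutative quantum structures").
-/

namespace BangTensor

/-- Edge names. -/
abbrev EdgeName : Type := ℕ
/-- !-box names (a set disjoint from edge names; modelled as a separate sort). -/
abbrev BoxName : Type := ℕ

/-- Directed edges: an output `â` or an input `ǎ`. -/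
inductive DirEdge : Type
  | out (a : EdgeName)
  | inp (a : EdgeName)
  deriving DecidableEq

namespace DirEdge

def name : DirEdge → EdgeName
  | out a => a
  | inp a => a

def partner : DirEdge → DirEdge
  | out a => inp a
  | inp a => out a

def rename (f : EdgeName → EdgeName) : DirEdge → DirEdge
  | out a => out (f a)
  | inp a => inp (f a)

end DirEdge

/-- A freshness function: a pair of bijections on edge names and !-box names. -/
structure Freshness : Type where
  em : EdgeName ≃ EdgeName
  bm : BoxName ≃ BoxName

/-- Edgeterms: built from the empty edgeterm, directed edges, clockwise
and anticlockwise edge groups, and concatenation. -/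
inductive EdgeTerm : Type
  | eps
  | edge (d : DirEdge)
  | cw (e : EdgeTerm) (A : BoxName)
  | acw (e : EdgeTerm) (A : BoxName)
  | cat (e f : EdgeTerm)
  deriving DecidableEq

namespace EdgeTerm

/-- Number of occurrences of a directed edge in an edgeterm. -/
def count (d : DirEdge) : EdgeTerm → ℕ
  | eps => 0
  | edge d' => if d' = d then 1 else 0
  | cw e _ => e.count d
  | acw e _ => e.count d
  | cat e f => e.count d + f.count d

/-- Edge context of a directed edge inside an edgeterm: the list of !-boxes
(edge groups) containing it, inside-out. -/
def ectx (d : DirEdge) : EdgeTerm → Option (List BoxName)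
  | eps => none
  | edge d' => if d' = d then some [] else none
  | cw e A => (e.ectx d).map (· ++ [A])
  | acw e A => (e.ectx d).map (· ++ [A])
  | cat e f => (e.ectx d).orElse (fun _ => f.ectx d)

def edgeNames : EdgeTerm → Set EdgeName
  | eps => ∅
  | edge d => {d.name}
  | cw e _ => e.edgeNames
  | acw e _ => e.edgeNames
  | cat e f => e.edgeNames ∪ f.edgeNames

def boxNames : EdgeTerm → Set BoxName
  | eps => ∅
  | edge _ => ∅
  | cw e A => insert A e.boxNames
  | acw e A => insert A e.boxNames
  | cat e f => e.boxNames ∪ f.boxNames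

def rename (f : EdgeName → EdgeName) (g : BoxName → BoxName) : EdgeTerm → EdgeTerm
  | eps => eps
  | edge d => edge (d.rename f)
  | cw e A => cw (e.rename f g) (g A)
  | acw e A => acw (e.rename f g) (g A)
  | cat e f' => cat (e.rename f g) (f'.rename f g)

/-- Rename the output edge `b̂` to `ĉ`. -/
def renameOut (b c : EdgeName) : EdgeTerm → EdgeTerm
  | eps => eps
  | edge (.out a) => edge (.out (if a = b then c else a))
  | edge (.inp a) => edge (.inp a)
  | cw e A => cw (e.renameOut b c) A
  | acw e A => acw (e.renameOut b c) A
  | cat e f => cat (e.renameOut b c) (f.renameOut b c)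

/-- Rename the input edge `b̌` to `č`. -/
def renameInp (b c : EdgeName) : EdgeTerm → EdgeTerm
  | eps => eps
  | edge (.out a) => edge (.out a)
  | edge (.inp a) => edge (.inp (if a = b then c else a))
  | cw e A => cw (e.renameInp b c) A
  | acw e A => acw (e.renameInp b c) A
  | cat e f => cat (e.renameInp b c) (f.renameInp b c)

/-- The operation `Kill_A` on edgeterms. -/
def kill (A : BoxName) : EdgeTerm → EdgeTerm
  | eps => eps
  | edge d => edge d
  | cw e B => if B = A then eps else cw (e.kill A) B
  | acw e B => if B = A then eps else acw (e.kill A) B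
  | cat e f => cat (e.kill A) (f.kill A)

/-- The operation `Drop_A` on edgeterms. -/
def drop (A : BoxName) : EdgeTerm → EdgeTerm
  | eps => eps
  | edge d => edge d
  | cw e B => if B = A then e else cw (e.drop A) B
  | acw e B => if B = A then e else acw (e.drop A) B
  | cat e f => cat (e.drop A) (f.drop A)

/-- The operation `Exp_{A,fr}` on edgeterms. -/
def exp (A : BoxName) (fr : Freshness) : EdgeTerm → EdgeTerm
  | eps => eps
  | edge d => edge d
  | cw e B => if B = A then cat (cw e B) (e.rename fr.em fr.bm) else cw (e.exp A fr) B
  | acw e B => if B = A then cat (e.rename fr.em fr.bm) (acw e B) else acw (e.exp A fr) B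
  | cat e f => cat (e.exp A fr) (f.exp A fr)

/-- The operation `Copy_{A,fr}` on edgeterms. -/
def copy (A : BoxName) (fr : Freshness) : EdgeTerm → EdgeTerm
  | eps => eps
  | edge d => edge d
  | cw e B =>
      if B = A then cat (cw e B) (cw (e.rename fr.em fr.bm) (fr.bm A)) else cw (e.copy A fr) B
  | acw e B =>
      if B = A then cat (acw (e.rename fr.em fr.bm) (fr.bm A)) (acw e B) else acw (e.copy A fr) B
  | cat e f => cat (e.copy A fr) (f.copy A fr)

/-- An edgeterm with no edge groups (a concrete edgeterm). -/
def noGroups : EdgeTerm → Prop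
  | eps => True
  | edge _ => True
  | cw _ _ => False
  | acw _ _ => False
  | cat e f => e.noGroups ∧ f.noGroups

/-- Equivalence of edgeterms: associativity and unit laws for concatenation,
and removal of empty edge groups; closed under congruence. -/
inductive Equiv : EdgeTerm → EdgeTerm → Prop
  | refl (e) : Equiv e e
  | symm {e f} : Equiv e f → Equiv f e
  | trans {e f g} : Equiv e f → Equiv f g → Equiv e g
  | cat_congr {e e' f f'} : Equiv e e' → Equiv f f' → Equiv (cat e f) (cat e' f')
  | cw_congr {e e'} (A) : Equiv e e' → Equiv (cw e A) (cw e' A)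
  | acw_congr {e e'} (A) : Equiv e e' → Equiv (acw e A) (acw e' A)
  | assoc (e f g) : Equiv (cat (cat e f) g) (cat e (cat f g))
  | unit_left (e) : Equiv (cat eps e) e
  | unit_right (e) : Equiv (cat e eps) e
  | cw_eps (A) : Equiv (cw eps A) eps
  | acw_eps (A) : Equiv (acw eps A) eps

end EdgeTerm

/-- !-pretensor expressions over a signature `σ`. -/
inductive Pretensor (σ : Type) : Type
  | unit
  | idt (a b : EdgeName)
  | gen (φ : σ) (e : EdgeTerm)
  | box (G : Pretensor σ) (A : BoxName)
  | prod (G H : Pretensor σ)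

namespace Pretensor

variable {σ : Type}

def edgeCount (d : DirEdge) : Pretensor σ → ℕ
  | unit => 0
  | idt a b => (if d = DirEdge.out a then 1 else 0) + (if d = DirEdge.inp b then 1 else 0)
  | gen _ e => e.count d
  | box G _ => G.edgeCount d
  | prod G H => G.edgeCount d + H.edgeCount d

def boxCount (A : BoxName) : Pretensor σ → ℕ
  | unit => 0
  | idt _ _ => 0
  | gen _ _ => 0
  | box G B => (if B = A then 1 else 0) + G.boxCount A
  | prod G H => G.boxCount A + H.boxCount A

/-- The pair (edge context, node context) of a directed edge, if it occurs. -/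
def ctx2 (d : DirEdge) : Pretensor σ → Option (List BoxName × List BoxName)
  | unit => none
  | idt a b => if d = DirEdge.out a ∨ d = DirEdge.inp b then some ([], []) else none
  | gen _ e => (e.ectx d).map (fun l => (l, []))
  | box G A => (G.ctx2 d).map (fun p => (p.1, p.2 ++ [A]))
  | prod G H => (G.ctx2 d).orElse (fun _ => H.ctx2 d)

/-- The edge context of a directed edge. -/
def ectxOf (G : Pretensor σ) (d : DirEdge) : Option (List BoxName) := (G.ctx2 d).map (·.1)

/-- The node context of a directed edge. -/
def nctxOf (G : Pretensor σ) (d : DirEdge) : Option (List BoxName) := (G.ctx2 d).map (·.2)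

/-- The (total) context of a directed edge: edge context followed by node context. -/
def ctxOf (G : Pretensor σ) (d : DirEdge) : Option (List BoxName) :=
  (G.ctx2 d).map (fun p => p.1 ++ p.2)

/-- The list of !-boxes enclosing the !-box `A`, inside-out, if `A` occurs. -/
def boxCtx (A : BoxName) : Pretensor σ → Option (List BoxName)
  | unit => none
  | idt _ _ => none
  | gen _ _ => none
  | box G B => if B = A then some [] else (G.boxCtx A).map (· ++ [B])
  | prod G H => (G.boxCtx A).orElse (fun _ => H.boxCtx A)

/-- `A ≺_G B`: the !-box `A` is nested immediately inside the !-box `B` in `G`. -/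
def Prec (G : Pretensor σ) (A B : BoxName) : Prop := ∃ l, G.boxCtx A = some (B :: l)

/-- `A` is nested (possibly not immediately) inside `B` in `G`. -/
def nestedIn (G : Pretensor σ) (A B : BoxName) : Prop := Relation.TransGen G.Prec A B

/-- `A` is a top-level !-box of `G` (it occurs and has no parent !-box). -/
def topLevel (G : Pretensor σ) (A : BoxName) : Prop := G.boxCtx A = some []

def edgeNames : Pretensor σ → Set EdgeName
  | unit => ∅
  | idt a b => {a, b}
  | gen _ e => e.edgeNames
  | box G _ => G.edgeNames
  | prod G H => G.edgeNames ∪ H.edgeNames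

def boxNames : Pretensor σ → Set BoxName
  | unit => ∅
  | idt _ _ => ∅
  | gen _ e => e.boxNames
  | box G A => insert A G.boxNames
  | prod G H => G.boxNames ∪ H.boxNames

/-- The directed edge `d` occurs in `G`. -/
def occursDir (G : Pretensor σ) (d : DirEdge) : Prop := G.edgeCount d ≠ 0

/-- The directed edge `d` is free in `G` (it occurs and its partner does not). -/
def freeDir (G : Pretensor σ) (d : DirEdge) : Prop := G.occursDir d ∧ ¬ G.occursDir d.partner

/-- The edge name `a` is free in `G`: exactly one of `â`, `ǎ` occurs in `G`. -/
def freeName (G : Pretensor σ) (a : EdgeName) : Prop :=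
  Xor' (G.occursDir (DirEdge.out a)) (G.occursDir (DirEdge.inp a))

/-- A !-tensor expression: a !-pretensor expression satisfying the freshness
conditions F1, F2 and the context conditions C1, C2, C3. -/
def IsTensorExpr (G : Pretensor σ) : Prop :=
  -- F1: each of `â` and `ǎ` occurs at most once per edge name
  (∀ d : DirEdge, G.edgeCount d ≤ 1) ∧
  -- F2: each !-box name has at most one occurrence of `[...]_A`
  (∀ A : BoxName, G.boxCount A ≤ 1) ∧
  -- C1: edge context and node context are disjoint
  (∀ (d : DirEdge) (ec nc : List BoxName), G.ctx2 d = some (ec, nc) → ec.Disjoint nc) ∧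
  -- C2: edge contexts consist of !-boxes of G, consecutively immediately nested
  (∀ (d : DirEdge) (ec nc : List BoxName), G.ctx2 d = some (ec, nc) →
    (∀ B ∈ ec, G.boxCount B ≠ 0) ∧ List.Chain' G.Prec ec) ∧
  -- C3: coherence for bound pairs
  (∀ (a : EdgeName) (eo no ei ni : List BoxName),
    G.ctx2 (DirEdge.out a) = some (eo, no) → G.ctx2 (DirEdge.inp a) = some (ei, ni) →
    ∃ es bs : List BoxName, es ++ ni = eo ++ bs ∧ es ++ no = ei ++ bs)

/-- Apply renamings of edge names and box names throughout a !-pretensor expression. -/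
def rename (f : EdgeName → EdgeName) (g : BoxName → BoxName) : Pretensor σ → Pretensor σ
  | unit => unit
  | idt a b => idt (f a) (f b)
  | gen φ e => gen φ (e.rename f g)
  | box G A => box (G.rename f g) (g A)
  | prod G H => prod (G.rename f g) (H.rename f g)

/-- Rename the output edge `b̂` to `ĉ`. -/
def renameOut (b c : EdgeName) : Pretensor σ → Pretensor σ
  | unit => unit
  | idt a y => idt (if a = b then c else a) y
  | gen φ e => gen φ (e.renameOut b c)
  | box G A => box (G.renameOut b c) A
  | prod G H => prod (G.renameOut b c) (H.renameOut b c)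

/-- Rename the input edge `b̌` to `č`. -/
def renameInp (b c : EdgeName) : Pretensor σ → Pretensor σ
  | unit => unit
  | idt a y => idt a (if y = b then c else y)
  | gen φ e => gen φ (e.renameInp b c)
  | box G A => box (G.renameInp b c) A
  | prod G H => prod (G.renameInp b c) (H.renameInp b c)

/-- Rename the edge name `a` (in both directions) to `c`. -/
def renameEdgeName (a c : EdgeName) (G : Pretensor σ) : Pretensor σ :=
  G.rename (fun x => if x = a then c else x) id

/-- Rename the !-box name `A` to `B`. -/
def renameBoxName (A B : BoxName) (G : Pretensor σ) : Pretensor σ :=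
  G.rename id (fun X => if X = A then B else X)

/-- The !-box operation `Kill_A`. -/
def kill (A : BoxName) : Pretensor σ → Pretensor σ
  | unit => unit
  | idt a b => idt a b
  | gen φ e => gen φ (e.kill A)
  | box G B => if B = A then unit else box (G.kill A) B
  | prod G H => prod (G.kill A) (H.kill A)

/-- The !-box operation `Drop_A`. -/
def drop (A : BoxName) : Pretensor σ → Pretensor σ
  | unit => unit
  | idt a b => idt a b
  | gen φ e => gen φ (e.drop A)
  | box G B => if B = A then G else box (G.drop A) B
  | prod G H => prod (G.drop A) (H.drop A)

/-- The !-box operation `Exp_{A,fr}`. -/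
def exp (A : BoxName) (fr : Freshness) : Pretensor σ → Pretensor σ
  | unit => unit
  | idt a b => idt a b
  | gen φ e => gen φ (e.exp A fr)
  | box G B => if B = A then prod (box G B) (G.rename fr.em fr.bm) else box (G.exp A fr) B
  | prod G H => prod (G.exp A fr) (H.exp A fr)

/-- The !-box operation `Copy_{A,fr}`. -/
def copy (A : BoxName) (fr : Freshness) : Pretensor σ → Pretensor σ
  | unit => unit
  | idt a b => idt a b
  | gen φ e => gen φ (e.copy A fr)
  | box G B =>
      if B = A then prod (box G B) (box (G.rename fr.em fr.bm) (fr.bm A))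
      else box (G.copy A fr) B
  | prod G H => prod (G.copy A fr) (H.copy A fr)

/-- Weakening `Wk_A^K`: add `K` inside the !-box `A`. -/
def wk (A : BoxName) (K : Pretensor σ) : Pretensor σ → Pretensor σ
  | box G B => if B = A then box (prod G K) B else box (wk A K G) B
  | prod G H => prod (wk A K G) (wk A K H)
  | G => G

/-- A concrete tensor expression: no !-boxes and no edge groups. -/
def IsConcrete : Pretensor σ → Prop
  | unit => True
  | idt _ _ => True
  | gen _ e => e.noGroups
  | box _ _ => False
  | prod G H => G.IsConcrete ∧ H.IsConcrete

/-- Nesting of !-boxes: `nest [(K₁,B₁),…,(Kₙ,Bₙ)] X = [Kₙ ⋯ [K₁ ⬝ X]_{B₁} ⋯]_{Bₙ}`. -/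
def nest : List (Pretensor σ × BoxName) → Pretensor σ → Pretensor σ
  | [], X => X
  | p :: rest, X => nest rest (box (prod p.1 X) p.2)

/-- Equivalence of !-tensor expressions: associativity, commutativity and unit
laws for product, edgeterm equivalences, renaming of bound edge names to fresh
names, and the identity-contraction laws. -/
inductive Equiv : Pretensor σ → Pretensor σ → Prop
  | refl (G) : Equiv G G
  | symm {G H} : Equiv G H → Equiv H G
  | trans {G H K} : Equiv G H → Equiv H K → Equiv G K
  | prod_congr {G G' H H'} : Equiv G G' → Equiv H H' → Equiv (prod G H) (prod G' H')
  | box_congr {G G'} (A) : Equiv G G' → Equiv (box G A) (box G' A)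
  | gen_congr (φ) {e e'} : EdgeTerm.Equiv e e' → Equiv (gen φ e) (gen φ e')
  | prod_assoc (G H K) : Equiv (prod (prod G H) K) (prod G (prod H K))
  | prod_comm (G H) : Equiv (prod G H) (prod H G)
  | prod_unit (G) : Equiv (prod G unit) G
  | bound_rename (G : Pretensor σ) (a c : EdgeName) :
      G.occursDir (DirEdge.out a) → G.occursDir (DirEdge.inp a) → c ∉ G.edgeNames →
      Equiv G (G.renameEdgeName a c)
  | contract_inp (G : Pretensor σ) (L : List (Pretensor σ × BoxName)) (a b : EdgeName) :
      G.occursDir (DirEdge.inp b) → ¬ G.occursDir (DirEdge.out b) →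
      Equiv (prod G (nest L (idt b a))) (prod (G.renameInp b a) (nest L unit))
  | contract_out (H : Pretensor σ) (L : List (Pretensor σ × BoxName)) (a b : EdgeName) :
      H.occursDir (DirEdge.out b) → ¬ H.occursDir (DirEdge.inp b) →
      Equiv (prod H (nest L (idt a b))) (prod (H.renameOut b a) (nest L unit))

/-- Rename the free edge names of `G` along `rn`. -/
def freeNameB (G : Pretensor σ) (a : EdgeName) : Bool :=
  (G.edgeCount (DirEdge.out a) != 0) ^^ (G.edgeCount (DirEdge.inp a) != 0)

end Pretensor

/-- Rename the free edge names of `G` along `rn`. -/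
def renameFree {σ : Type} (rn : EdgeName → EdgeName) (G : Pretensor σ) : Pretensor σ :=
  G.rename (fun a => if G.freeNameB a then rn a else a) id

/-- `fr` is a freshness function for `G`: names occurring in `G` are mapped
to names not occurring in `G`. -/
def Freshness.IsFreshFor {σ : Type} (fr : Freshness) (G : Pretensor σ) : Prop :=
  (∀ a ∈ G.edgeNames, fr.em a ∉ G.edgeNames) ∧ (∀ A ∈ G.boxNames, fr.bm A ∉ G.boxNames)

/-- The four !-box operations. -/
inductive BOp : Type
  | exp (A : BoxName) (fr : Freshness)
  | kill (A : BoxName)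
  | copy (A : BoxName) (fr : Freshness)
  | drop (A : BoxName)

/-- Apply a !-box operation. -/
def BOp.app {σ : Type} : BOp → Pretensor σ → Pretensor σ
  | .exp A fr, G => G.exp A fr
  | .kill A, G => G.kill A
  | .copy A fr, G => G.copy A fr
  | .drop A, G => G.drop A

/-- A !-box operation is applied appropriately: its freshness function (if any)
is a freshness function for the expression it is applied to. -/
def BOp.OK {σ : Type} : BOp → Pretensor σ → Prop
  | .exp _ fr, G => fr.IsFreshFor G
  | .copy _ fr, G => fr.IsFreshFor G
  | _, _ => True

def BOp.isExpKill : BOp → Prop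
  | .exp _ _ => True
  | .kill _ => True
  | _ => False

def BOp.notDrop : BOp → Prop
  | .drop _ => False
  | _ => True

/-- Apply a list of !-box operations, left to right. -/
def applyOps {σ : Type} : List BOp → Pretensor σ → Pretensor σ
  | [], G => G
  | op :: rest, G => applyOps rest (op.app G)

/-- Each operation in the list is applied appropriately. -/
def OpsOK {σ : Type} : List BOp → Pretensor σ → Prop
  | [], _ => True
  | op :: rest, G => op.OK G ∧ OpsOK rest (op.app G)

/-- An instantiation of `G`: a finite composite of (appropriately applied)
`Exp` and `Kill` operations whose result contains no !-boxes. -/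
def IsInst {σ : Type} (i : List BOp) (G : Pretensor σ) : Prop :=
  (∀ op ∈ i, op.isExpKill) ∧ OpsOK i G ∧ (applyOps i G).IsConcrete

/-- Compatible boundaries: identical free edges, the same !-boxes with the same
immediate-nesting relation, and equal contexts on free edges. -/
def Compatible {σ : Type} (G H : Pretensor σ) : Prop :=
  (∀ d, G.freeDir d ↔ H.freeDir d) ∧
  (∀ A, G.boxCount A ≠ 0 ↔ H.boxCount A ≠ 0) ∧
  (∀ A B, G.Prec A B ↔ H.Prec A B) ∧
  (∀ d, G.freeDir d → G.ctxOf d = H.ctxOf d)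

/-- The set of concrete instances of the !-tensor equation `G = H`. -/
def ConcInst {σ : Type} (G H : Pretensor σ) : Set (Pretensor σ × Pretensor σ) :=
  {p | ∃ i : List BOp, IsInst i G ∧ p = (applyOps i G, applyOps i H)}

end BangTensor

namespace BangTensor


section Aux

/-- Remove the last occurrence of `A` from a list. -/
def rmLast (A : ℕ) (l : List ℕ) : List ℕ := (l.reverse.erase A).reverse

theorem rmLast_of_not_mem {A : ℕ} {l : List ℕ} (h : A ∉ l) : rmLast A l = l := by
  unfold rmLast
  rw [List.erase_of_not_mem (by simpa using h), List.reverse_reverse]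

theorem rmLast_append_right {A : ℕ} (l1 l2 : List ℕ) (h : A ∈ l2) :
    rmLast A (l1 ++ l2) = l1 ++ rmLast A l2 := by
  unfold rmLast
  rw [List.reverse_append, List.erase_append_left _ (by simpa using h),
    List.reverse_append, List.reverse_reverse]

theorem rmLast_append_left {A : ℕ} (l1 l2 : List ℕ) (h : A ∉ l2) :
    rmLast A (l1 ++ l2) = rmLast A l1 ++ l2 := by
  unfold rmLast
  rw [List.reverse_append, List.erase_append_right _ (by simpa using h),
    List.reverse_append, List.reverse_reverse]

theorem rmLast_concat_self (A : ℕ) (l : List ℕ) : rmLast A (l ++ [A]) = l := by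
  unfold rmLast
  simp

theorem rmLast_concat_ne {A B : ℕ} (l : List ℕ) (h : B ≠ A) :
    rmLast A (l ++ [B]) = rmLast A l ++ [B] :=
  rmLast_append_left l [B] (by simp [Ne.symm h])

theorem rmLast_cons_mem {A : ℕ} {m : List ℕ} (C : ℕ) (h : A ∈ m) :
    rmLast A (C :: m) = C :: rmLast A m := by
  simpa using rmLast_append_right [C] m h

theorem rmLast_cons_self {A : ℕ} {m : List ℕ} (h : A ∉ m) : rmLast A (A :: m) = m := by
  have := rmLast_append_left [A] m h
  simpa [show rmLast A [A] = [] from by simp [rmLast]] using this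

theorem rmLast_subset {A : ℕ} {l : List ℕ} : rmLast A l ⊆ l := by
  intro x hx
  unfold rmLast at hx
  rw [List.mem_reverse] at hx
  have := (l.reverse.erase_sublist (a := A)).subset hx
  simpa using this

theorem rmLast_eq_filter {A : ℕ} {l : List ℕ} (h : l.count A ≤ 1) :
    rmLast A l = l.filter (· ≠ A) := by
  induction l with
  | nil => simp [rmLast]
  | cons x t ih =>
    by_cases hx : x = A
    · rw [hx]
      rw [hx] at h
      have ht : A ∉ t := by
        intro hm
        have h1 : 1 ≤ t.count A := List.one_le_count_iff.mpr hm
        rw [List.count_cons_self] at h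
        omega
      rw [rmLast_cons_self ht, List.filter_cons_of_neg (by simp)]
      rw [List.filter_eq_self.mpr]
      intro y hy
      simp only [decide_eq_true_eq]
      rintro rfl; exact ht hy
    · by_cases hm : A ∈ t
      · rw [show x :: t = [x] ++ t from rfl, rmLast_append_right [x] t hm]
        have hcount : t.count A ≤ 1 := by
          rw [List.count_cons_of_ne (by simpa using hx)] at h
          exact h
        rw [ih hcount]
        simp [List.filter_cons, hx]
      · rw [rmLast_of_not_mem (by simp [Ne.symm hx, hm]), eq_comm]
        apply List.filter_eq_self.mpr
        intro y hy
        simp only [decide_eq_true_eq]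
        rintro rfl
        rcases List.mem_cons.mp hy with h' | h'
        · exact hx h'.symm
        · exact hm h'

theorem option_map_orElse {α β : Type*} (g : α → β) (x y : Option α) :
    ((x.map g).orElse fun _ => y.map g) = (x.orElse fun _ => y).map g := by
  cases x <;> rfl

theorem chain'_imp_mem {α : Type*} {r r' : α → α → Prop} :
    ∀ {l : List α}, l.Chain' r → (∀ x ∈ l, ∀ y ∈ l, r x y → r' x y) → l.Chain' r'
  | [], _, _ => List.isChain_nil
  | [_], _, _ => List.isChain_singleton _
  | x :: y :: t, h, hm => by
    unfold List.Chain' at h ⊢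
    rw [List.isChain_cons_cons] at h ⊢
    exact ⟨hm x (by simp) y (by simp) h.1,
      chain'_imp_mem h.2 (fun a ha b hb => hm a (by simp [ha]) b (by simp [hb]))⟩



theorem EdgeTerm.drop_cw_self (e : EdgeTerm) (A : BoxName) : (EdgeTerm.cw e A).drop A = e := by
  simp [EdgeTerm.drop]

theorem EdgeTerm.drop_cw_ne (e : EdgeTerm) {A B : BoxName} (h : B ≠ A) :
    (EdgeTerm.cw e B).drop A = EdgeTerm.cw (e.drop A) B := by
  simp [EdgeTerm.drop, h]

theorem EdgeTerm.drop_acw_self (e : EdgeTerm) (A : BoxName) : (EdgeTerm.acw e A).drop A = e := by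
  simp [EdgeTerm.drop]

theorem EdgeTerm.drop_acw_ne (e : EdgeTerm) {A B : BoxName} (h : B ≠ A) :
    (EdgeTerm.acw e B).drop A = EdgeTerm.acw (e.drop A) B := by
  simp [EdgeTerm.drop, h]

theorem Pretensor.drop_box_self {σ : Type} (G : Pretensor σ) (A : BoxName) :
    (Pretensor.box G A).drop A = G := by
  simp [Pretensor.drop]

theorem Pretensor.drop_box_ne {σ : Type} (G : Pretensor σ) {A B : BoxName} (h : B ≠ A) :
    (Pretensor.box G B).drop A = Pretensor.box (G.drop A) B := by
  simp [Pretensor.drop, h]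

theorem chain'_remove_middle {α : Type*} {r r' : α → α → Prop} {a : α} (l1 l2 : List α)
    (h : (l1 ++ a :: l2).Chain' r)
    (hpair : ∀ x y, x ≠ a → y ≠ a → r x y → r' x y)
    (hjump : ∀ x y, x ≠ a → y ≠ a → r x a → r a y → r' x y)
    (h1 : a ∉ l1) (h2 : a ∉ l2) : (l1 ++ l2).Chain' r' := by
  unfold List.Chain' at h ⊢
  rw [List.isChain_append] at h
  obtain ⟨hc1, hc2, hlink⟩ := h
  rw [List.isChain_cons] at hc2
  obtain ⟨hhead, hc2'⟩ := hc2
  rw [List.isChain_append]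
  refine ⟨chain'_imp_mem hc1 (fun x hx y hy hr =>
      hpair x y (fun e => h1 (e ▸ hx)) (fun e => h1 (e ▸ hy)) hr),
    chain'_imp_mem hc2' (fun x hx y hy hr =>
      hpair x y (fun e => h2 (e ▸ hx)) (fun e => h2 (e ▸ hy)) hr), ?_⟩
  intro x hx y hy
  have hxm : x ∈ l1 := List.mem_of_mem_getLast? hx
  have hym : y ∈ l2 := List.mem_of_mem_head? hy
  exact hjump x y (fun e => h1 (e ▸ hxm)) (fun e => h2 (e ▸ hym))
    (hlink x hx a (by simp)) (hhead y hy)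

theorem exists_split_of_count_le_one {A : ℕ} {l : List ℕ} (hc : l.count A ≤ 1) (hm : A ∈ l) :
    ∃ l1 l2, l = l1 ++ A :: l2 ∧ A ∉ l1 ∧ A ∉ l2 ∧ rmLast A l = l1 ++ l2 := by
  obtain ⟨l1, l2, rfl⟩ := List.append_of_mem hm
  have hcc : l1.count A + (l2.count A + 1) ≤ 1 := by
    simpa [List.count_append] using hc
  have h1 : A ∉ l1 := by
    intro h; have := List.one_le_count_iff.mpr h; omega
  have h2 : A ∉ l2 := by
    intro h; have := List.one_le_count_iff.mpr h; omega
  refine ⟨l1, l2, rfl, h1, h2, ?_⟩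
  rw [rmLast_append_right l1 _ (by simp), rmLast_cons_self h2]

namespace EdgeTerm

theorem count_drop (A : BoxName) (d : DirEdge) :
    ∀ e : EdgeTerm, (e.drop A).count d = e.count d
  | eps => rfl
  | edge _ => rfl
  | cw e B => by
    by_cases hB : B = A <;> simp [drop, hB, count, count_drop A d e]
  | acw e B => by
    by_cases hB : B = A <;> simp [drop, hB, count, count_drop A d e]
  | cat e f => by
    simp [drop, count, count_drop A d e, count_drop A d f]

theorem ectx_drop (A : BoxName) (d : DirEdge) :
    ∀ e : EdgeTerm, (e.drop A).ectx d = (e.ectx d).map (rmLast A)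
  | eps => rfl
  | edge d' => by
    simp only [drop, ectx]
    split <;> simp [rmLast]
  | cw e B => by
    by_cases hB : B = A
    · subst hB
      rw [drop_cw_self]
      simp only [ectx]
      cases h : e.ectx d <;> simp [h, rmLast_concat_self]
    · rw [drop_cw_ne _ hB]
      simp only [ectx, ectx_drop A d e]
      cases h : e.ectx d <;> simp [h, rmLast_concat_ne _ hB]
  | acw e B => by
    by_cases hB : B = A
    · subst hB
      rw [drop_acw_self]
      simp only [ectx]
      cases h : e.ectx d <;> simp [h, rmLast_concat_self]
    · rw [drop_acw_ne _ hB]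
      simp only [ectx, ectx_drop A d e]
      cases h : e.ectx d <;> simp [h, rmLast_concat_ne _ hB]
  | cat e f => by
    simp only [drop, ectx, ectx_drop A d e, ectx_drop A d f]
    cases h : e.ectx d <;> simp [Option.orElse]

end EdgeTerm

namespace Pretensor

variable {σ : Type}

theorem edgeCount_drop (A : BoxName) (d : DirEdge) :
    ∀ G : Pretensor σ, (G.drop A).edgeCount d = G.edgeCount d
  | unit => rfl
  | idt _ _ => rfl
  | gen φ e => by simp [drop, edgeCount, EdgeTerm.count_drop]
  | box G B => by
    by_cases hB : B = A <;> simp [drop, hB, edgeCount, edgeCount_drop A d G]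
  | prod G H => by
    simp [drop, edgeCount, edgeCount_drop A d G, edgeCount_drop A d H]

theorem boxCount_drop_le (A B : BoxName) :
    ∀ G : Pretensor σ, (G.drop A).boxCount B ≤ G.boxCount B
  | unit => le_refl _
  | idt _ _ => le_refl _
  | gen _ _ => le_refl _
  | box G C => by
    by_cases hC : C = A
    · subst hC
      rw [drop_box_self]
      simp only [boxCount]
      exact Nat.le_add_left _ _
    · rw [drop_box_ne _ hC]
      simp only [boxCount]
      exact Nat.add_le_add_left (boxCount_drop_le A B G) _
  | prod G H =>
    Nat.add_le_add (boxCount_drop_le A B G) (boxCount_drop_le A B H)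

theorem boxCount_drop_ne (A B : BoxName) (hBA : B ≠ A) :
    ∀ G : Pretensor σ, (G.drop A).boxCount B = G.boxCount B
  | unit => rfl
  | idt _ _ => rfl
  | gen _ _ => rfl
  | box G C => by
    by_cases hC : C = A
    · subst hC
      rw [drop_box_self]
      simp only [boxCount, if_neg (fun h : C = B => hBA h.symm)]
      omega
    · rw [drop_box_ne _ hC]
      simp only [boxCount, boxCount_drop_ne A B hBA G]
  | prod G H => by
    simp only [drop, boxCount, boxCount_drop_ne A B hBA G, boxCount_drop_ne A B hBA H]

theorem boxCtx_drop (A B : BoxName) (hBA : B ≠ A) :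
    ∀ G : Pretensor σ, (G.drop A).boxCtx B = (G.boxCtx B).map (rmLast A)
  | unit => rfl
  | idt _ _ => rfl
  | gen _ _ => rfl
  | box G C => by
    by_cases hC : C = A
    · subst hC
      rw [drop_box_self]
      simp only [boxCtx, if_neg (fun h : C = B => hBA h.symm)]
      cases h : G.boxCtx B <;> simp [h, rmLast_concat_self]
    · rw [drop_box_ne _ hC]
      simp only [boxCtx]
      by_cases hCB : C = B
      · simp [hCB, rmLast]
      · simp only [if_neg hCB, boxCtx_drop A B hBA G]
        cases h : G.boxCtx B <;> simp [h, rmLast_concat_ne _ hC]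
  | prod G H => by
    simp only [drop, boxCtx, boxCtx_drop A B hBA G, boxCtx_drop A B hBA H]
    cases h : G.boxCtx B <;> simp [Option.orElse]

theorem ctx2_drop (A : BoxName) (d : DirEdge) :
    ∀ G : Pretensor σ, (G.drop A).ctx2 d =
      (G.ctx2 d).map (fun p => if A ∈ p.2 then (p.1, rmLast A p.2) else (rmLast A p.1, p.2))
  | unit => rfl
  | idt a b => by
    simp only [drop, ctx2]
    split <;> simp [rmLast]
  | gen φ e => by
    simp only [drop, ctx2, EdgeTerm.ectx_drop]
    cases h : e.ectx d <;> simp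
  | box G C => by
    by_cases hC : C = A
    · subst hC
      rw [drop_box_self]
      simp only [ctx2]
      cases h : G.ctx2 d with
      | none => simp [h]
      | some p => simp [h, rmLast_concat_self]
    · rw [drop_box_ne _ hC]
      simp only [ctx2, ctx2_drop A d G]
      cases h : G.ctx2 d with
      | none => simp
      | some p =>
        simp only [Option.map_some, Option.map_map]
        congr 1
        by_cases hm : A ∈ p.2
        · simp [Function.comp, hm, rmLast_concat_ne _ hC,
            List.mem_append, show ¬ A = C from fun h => hC h.symm]
        · simp [Function.comp, hm, List.mem_append,
            show ¬ A = C from fun h => hC h.symm]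
  | prod G H => by
    simp only [drop, ctx2, ctx2_drop A d G, ctx2_drop A d H]
    cases h : G.ctx2 d <;> simp [Option.orElse]

theorem nctx_count (B : BoxName) :
    ∀ (G : Pretensor σ) (d : DirEdge) (ec nc : List BoxName),
      G.ctx2 d = some (ec, nc) → nc.count B ≤ G.boxCount B
  | unit, d, ec, nc, h => by simp [ctx2] at h
  | idt a b, d, ec, nc, h => by
    simp only [ctx2] at h
    split at h
    · cases h; simp [boxCount]
    · cases h
  | gen φ e, d, ec, nc, h => by
    simp only [ctx2] at h
    cases he : e.ectx d <;> rw [he] at h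
    · cases h
    · simp at h
      rw [h.2]
      simp [boxCount]
  | box G C, d, ec, nc, h => by
    simp only [ctx2] at h
    cases hG : G.ctx2 d <;> rw [hG] at h
    · cases h
    · rename_i p
      obtain ⟨ec0, nc0⟩ := p
      rw [Option.map_some] at h
      simp only [Option.some_inj, Prod.mk.injEq] at h
      obtain ⟨h1, h2⟩ := h
      subst h1
      subst h2
      have hrec := nctx_count B G d ec0 nc0 hG
      simp only [boxCount, List.count_append]
      have hc : List.count B [C] ≤ if C = B then 1 else 0 := by
        by_cases hCB : C = B <;> simp [hCB, List.count_singleton]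
      omega
  | prod G H, d, ec, nc, h => by
    simp only [ctx2] at h
    cases hG : G.ctx2 d <;> rw [hG] at h
    · simp only [Option.orElse] at h
      have := nctx_count B H d ec nc h
      simp only [boxCount]
      omega
    · simp only [Option.orElse] at h
      cases h
      have := nctx_count B G d ec nc hG
      simp only [boxCount]
      omega

theorem boxCtx_count (B C : BoxName) :
    ∀ (G : Pretensor σ) (l : List BoxName), G.boxCtx B = some l →
      l.count C + (if B = C then 1 else 0) ≤ G.boxCount C
  | unit, l, h => by simp [boxCtx] at h
  | idt a b, l, h => by simp [boxCtx] at h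
  | gen φ e, l, h => by simp [boxCtx] at h
  | box G D, l, h => by
    simp only [boxCtx] at h
    by_cases hD : D = B
    · rw [if_pos hD] at h
      obtain rfl : ([] : List BoxName) = l := by simpa using h
      subst hD
      simp only [boxCount, List.count_nil]
      by_cases hBC : D = C <;> simp [hBC]
    · rw [if_neg hD] at h
      cases hG : G.boxCtx B <;> rw [hG] at h
      · cases h
      · rename_i l'
        obtain rfl : l' ++ [D] = l := by simpa using h
        have := boxCtx_count B C G l' hG
        simp only [boxCount, List.count_append]
        have hc : List.count C [D] ≤ if D = C then 1 else 0 := by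
          by_cases hDC : D = C <;> simp [hDC, List.count_singleton]
        omega
  | prod G H, l, h => by
    simp only [boxCtx] at h
    cases hG : G.boxCtx B <;> rw [hG] at h
    · simp only [Option.orElse] at h
      have := boxCtx_count B C H l h
      simp only [boxCount]
      omega
    · simp only [Option.orElse] at h
      cases h
      have := boxCtx_count B C G l hG
      simp only [boxCount]
      omega

theorem boxCount_ne_zero_of_boxCtx {G : Pretensor σ} {B : BoxName} {l : List BoxName}
    (h : G.boxCtx B = some l) : G.boxCount B ≠ 0 := by
  have := boxCtx_count B B G l h
  simp at this
  omega

theorem boxCount_ne_zero_of_mem_boxCtx {G : Pretensor σ} {B C : BoxName} {l : List BoxName}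
    (h : G.boxCtx B = some l) (hC : C ∈ l) : G.boxCount C ≠ 0 := by
  have h1 := boxCtx_count B C G l h
  have h2 : 1 ≤ l.count C := List.one_le_count_iff.mpr hC
  omega

theorem boxCtx_isSome_of_ne_zero :
    ∀ (G : Pretensor σ) (B : BoxName), G.boxCount B ≠ 0 → ∃ l, G.boxCtx B = some l
  | unit, B, h => by simp [boxCount] at h
  | idt a b, B, h => by simp [boxCount] at h
  | gen φ e, B, h => by simp [boxCount] at h
  | box G D, B, h => by
    by_cases hD : D = B
    · exact ⟨[], by simp [boxCtx, hD]⟩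
    · simp only [boxCount, if_neg hD] at h
      obtain ⟨l, hl⟩ := boxCtx_isSome_of_ne_zero G B (by omega)
      exact ⟨l ++ [D], by simp [boxCtx, hD, hl]⟩
  | prod G H, B, h => by
    simp only [boxCount] at h
    by_cases hG : G.boxCount B = 0
    · have hH : H.boxCount B ≠ 0 := by omega
      obtain ⟨l, hl⟩ := boxCtx_isSome_of_ne_zero H B hH
      refine ⟨l, ?_⟩
      simp only [boxCtx]
      cases hGc : G.boxCtx B
      · simp [Option.orElse, hl]
      · exact absurd hG (boxCount_ne_zero_of_boxCtx hGc)
    · obtain ⟨l, hl⟩ := boxCtx_isSome_of_ne_zero G B hG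
      exact ⟨l, by simp [boxCtx, hl, Option.orElse]⟩

theorem boxCtx_suffix :
    ∀ (G : Pretensor σ), (∀ X, G.boxCount X ≤ 1) →
      ∀ (B C : BoxName) (l1 l2 : List BoxName), G.boxCtx B = some (l1 ++ C :: l2) →
        G.boxCtx C = some l2
  | unit, _, B, C, l1, l2, h => by simp [boxCtx] at h
  | idt a b, _, B, C, l1, l2, h => by simp [boxCtx] at h
  | gen φ e, _, B, C, l1, l2, h => by simp [boxCtx] at h
  | box G D, hle, B, C, l1, l2, h => by
    have hleG : ∀ X, G.boxCount X ≤ 1 := by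
      intro X
      have := hle X
      simp only [boxCount] at this
      omega
    simp only [boxCtx] at h
    by_cases hD : D = B
    · rw [if_pos hD] at h
      have : ([] : List BoxName) = l1 ++ C :: l2 := by simpa using h
      exact absurd this.symm (by simp)
    · rw [if_neg hD] at h
      cases hG : G.boxCtx B <;> rw [hG] at h
      · cases h
      · rename_i l'
        have hl : l' ++ [D] = l1 ++ C :: l2 := by simpa using h
        rcases l2.eq_nil_or_concat with rfl | ⟨l2', D', rfl⟩
        · -- l2 = [], so D = C, l' = l1
          have h2 : l' ++ [D] = l1 ++ [C] := by simpa using hl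
          have hDC : D = C := by
            have := List.append_inj_right h2 (by
              have := congrArg List.length h2
              simpa using this)
            simpa using this
          simp only [boxCtx, if_pos hDC]
        · -- l2 = l2' ++ [D']
          have h2 : l' ++ [D] = (l1 ++ C :: l2') ++ [D'] := by
            rw [hl]; simp
          have hlen : l'.length = (l1 ++ C :: l2').length := by
            have := congrArg List.length h2
            simp at this ⊢
            omega
          have hDD' : D = D' := by
            have := List.append_inj_right h2 hlen
            simpa using this
          have hl' : l' = l1 ++ C :: l2' := List.append_inj_left h2 hlen
          have hDC : D ≠ C := by
            intro hDC
            have hz : G.boxCount C = 0 := by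
              have := hle C
              simp only [boxCount, if_pos hDC] at this
              omega
            exact boxCount_ne_zero_of_mem_boxCtx (hl' ▸ hG) (by simp) hz
          have hrec := boxCtx_suffix G hleG B C l1 l2' (hl' ▸ hG)
          simp only [boxCtx, if_neg hDC, hrec, Option.map_some]
          rw [hDD']
          simp [List.concat_eq_append]
  | prod G H, hle, B, C, l1, l2, h => by
    have hleG : ∀ X, G.boxCount X ≤ 1 := fun X => by
      have := hle X; simp only [boxCount] at this; omega
    have hleH : ∀ X, H.boxCount X ≤ 1 := fun X => by
      have := hle X; simp only [boxCount] at this; omega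
    simp only [boxCtx] at h ⊢
    cases hG : G.boxCtx B <;> rw [hG] at h
    · simp only [Option.orElse] at h
      have hrec := boxCtx_suffix H hleH B C l1 l2 h
      have hGC : G.boxCtx C = none := by
        cases hGC : G.boxCtx C with
        | none => rfl
        | some l =>
          have h1 : G.boxCount C ≠ 0 := boxCount_ne_zero_of_boxCtx hGC
          have h2 : H.boxCount C ≠ 0 := boxCount_ne_zero_of_mem_boxCtx h (by simp)
          have := hle C
          simp only [boxCount] at this
          omega
      simp [hGC, Option.orElse, hrec]
    · simp only [Option.orElse] at h
      cases h
      have hrec := boxCtx_suffix G hleG B C l1 l2 hG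
      simp [hrec, Option.orElse]

theorem nodup_of_chain' {G : Pretensor σ} (hle : ∀ X, G.boxCount X ≤ 1)
    {l : List BoxName} (h : l.Chain' G.Prec) : l.Nodup := by
  classical
  set f : BoxName → ℕ := fun B => ((G.boxCtx B).map List.length).getD 0 with hf
  have step : ∀ a b, G.Prec a b → f b < f a := by
    rintro a b ⟨m, hm⟩
    have hb := boxCtx_suffix G hle a b [] m (by simpa using hm)
    simp [hf, hm, hb]
  have h2 : l.Chain' (fun a b => f b < f a) := List.IsChain.imp step h
  haveI : IsTrans BoxName (fun a b => f b < f a) := ⟨fun a b c h1 h2 => lt_trans h2 h1⟩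
  have h3 := List.isChain_iff_pairwise.mp h2
  exact h3.imp fun {a b} hab => by rintro rfl; exact lt_irrefl _ hab

theorem prec_drop {G : Pretensor σ} {A B C : BoxName} (hB : B ≠ A) (hC : C ≠ A)
    (h : G.Prec B C) : (G.drop A).Prec B C := by
  obtain ⟨m, hm⟩ := h
  by_cases hm' : A ∈ m
  · exact ⟨rmLast A m, by rw [boxCtx_drop A B hB, hm]; simp [rmLast_cons_mem _ hm']⟩
  · refine ⟨m, ?_⟩
    rw [boxCtx_drop A B hB, hm]
    simp [rmLast_of_not_mem (show A ∉ C :: m from by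
      simp only [List.mem_cons]
      rintro (rfl | hx)
      · exact hC rfl
      · exact hm' hx)]

theorem prec_drop_jump {G : Pretensor σ} (hle : ∀ X, G.boxCount X ≤ 1) {A x y : BoxName}
    (hx : x ≠ A) (h1 : G.Prec x A) (h2 : G.Prec A y) : (G.drop A).Prec x y := by
  obtain ⟨m, hm⟩ := h1
  obtain ⟨m2, hm2⟩ := h2
  have hA : G.boxCtx A = some m := boxCtx_suffix G hle x A [] m (by simpa using hm)
  rw [hA] at hm2
  obtain rfl : m = y :: m2 := by simpa using hm2
  have hnotin : A ∉ y :: m2 := by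
    intro hmem
    have hcnt := boxCtx_count A A G (y :: m2) hA
    have hone : (if A = A then 1 else 0) = 1 := by simp
    rw [hone] at hcnt
    have := List.one_le_count_iff.mpr hmem
    have := hle A
    omega
  refine ⟨m2, ?_⟩
  rw [boxCtx_drop A x hx, hm]
  simp only [Option.map_some]
  rw [rmLast_cons_self hnotin]

end Pretensor

end Aux

/-- If `G` is a !-tensor expression and `A` is a !-box name,
then `Drop_A(G)` is again a !-tensor expression. -/
theorem drop_preserves_tensorExpr {σ : Type} (G : Pretensor σ)
    (hG : Pretensor.IsTensorExpr G) (A : BoxName) :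
    Pretensor.IsTensorExpr (G.drop A) := by
  obtain ⟨hF1, hF2, hC1, hC2, hC3⟩ := hG
  have hctx := fun d => Pretensor.ctx2_drop A d G
  have unf : ∀ d ec nc, (G.drop A).ctx2 d = some (ec, nc) →
      ∃ ec₀ nc₀, G.ctx2 d = some (ec₀, nc₀) ∧
        ((A ∈ nc₀ ∧ ec = ec₀ ∧ nc = rmLast A nc₀) ∨
         (A ∉ nc₀ ∧ ec = rmLast A ec₀ ∧ nc = nc₀)) := by
    intro d ec nc h
    rw [hctx d] at h
    cases hG2 : G.ctx2 d with
    | none => rw [hG2] at h; cases h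
    | some p =>
      rw [hG2] at h
      obtain ⟨ec₀, nc₀⟩ := p
      rw [Option.map_some] at h
      refine ⟨ec₀, nc₀, rfl, ?_⟩
      by_cases hm : A ∈ nc₀
      · simp only [hm, if_true, Option.some_inj, Prod.mk.injEq] at h
        exact Or.inl ⟨hm, h.1.symm, h.2.symm⟩
      · simp only [hm, if_false, Option.some_inj, Prod.mk.injEq] at h
        exact Or.inr ⟨hm, h.1.symm, h.2.symm⟩
  refine ⟨?_, ?_, ?_, ?_, ?_⟩
  · intro d
    rw [Pretensor.edgeCount_drop]
    exact hF1 d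
  · intro B
    exact le_trans (Pretensor.boxCount_drop_le A B G) (hF2 B)
  · -- C1
    intro d ec nc h
    obtain ⟨ec₀, nc₀, hG2, hcase⟩ := unf d ec nc h
    have hd := hC1 d ec₀ nc₀ hG2
    rcases hcase with ⟨hm, rfl, rfl⟩ | ⟨hm, rfl, rfl⟩
    · exact fun a ha hb => hd ha (rmLast_subset hb)
    · exact fun a ha hb => hd (rmLast_subset ha) hb
  · -- C2
    intro d ec nc h
    obtain ⟨ec₀, nc₀, hG2, hcase⟩ := unf d ec nc h
    have hd := hC1 d ec₀ nc₀ hG2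
    obtain ⟨hbox, hchain⟩ := hC2 d ec₀ nc₀ hG2
    have hnodup : ec₀.Nodup := Pretensor.nodup_of_chain' hF2 hchain
    have hcount : ec₀.count A ≤ 1 := List.nodup_iff_count_le_one.mp hnodup A
    have main : A ∉ ec₀ →
        ((∀ B ∈ ec₀, (G.drop A).boxCount B ≠ 0) ∧ ec₀.Chain' (G.drop A).Prec) := by
      intro hA
      constructor
      · intro B hB
        rw [Pretensor.boxCount_drop_ne A B (fun e => hA (e ▸ hB))]
        exact hbox B hB
      · exact chain'_imp_mem hchain (fun x hx y hy hr =>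
          Pretensor.prec_drop (fun e => hA (e ▸ hx)) (fun e => hA (e ▸ hy)) hr)
    rcases hcase with ⟨hm, rfl, rfl⟩ | ⟨hm, rfl, rfl⟩
    · exact main (fun ha => hd ha hm)
    · by_cases hA : A ∈ ec₀
      · obtain ⟨l1, l2, hsplit, h1, h2, hrm⟩ := exists_split_of_count_le_one hcount hA
        rw [hrm]
        subst hsplit
        constructor
        · intro B hB
          have hBA : B ≠ A := by
            rintro rfl
            rcases List.mem_append.mp hB with h' | h'
            · exact h1 h'
            · exact h2 h'
          rw [Pretensor.boxCount_drop_ne A B hBA]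
          exact hbox B (by
            rcases List.mem_append.mp hB with h' | h' <;> simp [h'])
        · exact chain'_remove_middle l1 l2 hchain
            (fun x y hx hy hr => Pretensor.prec_drop hx hy hr)
            (fun x y hx hy hxa hay => Pretensor.prec_drop_jump hF2 hx hxa hay)
            h1 h2
      · rw [rmLast_of_not_mem hA]
        exact main hA
  · -- C3
    intro a eo' no' ei' ni' hout hin
    obtain ⟨eo, no, hGo, hcaseo⟩ := unf _ _ _ hout
    obtain ⟨ei, ni, hGi, hcasei⟩ := unf _ _ _ hin
    obtain ⟨es, bs, heq1, heq2⟩ := hC3 a eo no ei ni hGo hGi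
    have hdo := hC1 _ _ _ hGo
    have hdi := hC1 _ _ _ hGi
    have hcnt_eo : eo.count A ≤ 1 :=
      List.nodup_iff_count_le_one.mp (Pretensor.nodup_of_chain' hF2 (hC2 _ _ _ hGo).2) A
    have hcnt_ei : ei.count A ≤ 1 :=
      List.nodup_iff_count_le_one.mp (Pretensor.nodup_of_chain' hF2 (hC2 _ _ _ hGi).2) A
    have hcnt_no : no.count A ≤ 1 := le_trans (Pretensor.nctx_count A G _ eo no hGo) (hF2 A)
    have hcnt_ni : ni.count A ≤ 1 := le_trans (Pretensor.nctx_count A G _ ei ni hGi) (hF2 A)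
    have hfo : eo' = eo.filter (· ≠ A) ∧ no' = no.filter (· ≠ A) := by
      rcases hcaseo with ⟨hm, rfl, rfl⟩ | ⟨hm, rfl, rfl⟩
      · refine ⟨?_, rmLast_eq_filter hcnt_no⟩
        rw [eq_comm]
        apply List.filter_eq_self.mpr
        intro x hx
        simp only [decide_eq_true_eq]
        rintro rfl
        exact hdo hx hm
      · refine ⟨rmLast_eq_filter hcnt_eo, ?_⟩
        rw [eq_comm]
        apply List.filter_eq_self.mpr
        intro x hx
        simp only [decide_eq_true_eq]
        rintro rfl
        exact hm hx
    have hfi : ei' = ei.filter (· ≠ A) ∧ ni' = ni.filter (· ≠ A) := by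
      rcases hcasei with ⟨hm, rfl, rfl⟩ | ⟨hm, rfl, rfl⟩
      · refine ⟨?_, rmLast_eq_filter hcnt_ni⟩
        rw [eq_comm]
        apply List.filter_eq_self.mpr
        intro x hx
        simp only [decide_eq_true_eq]
        rintro rfl
        exact hdi hx hm
      · refine ⟨rmLast_eq_filter hcnt_ei, ?_⟩
        rw [eq_comm]
        apply List.filter_eq_self.mpr
        intro x hx
        simp only [decide_eq_true_eq]
        rintro rfl
        exact hm hx
    obtain ⟨hfo1, hfo2⟩ := hfo
    obtain ⟨hfi1, hfi2⟩ := hfi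
    refine ⟨es.filter (· ≠ A), bs.filter (· ≠ A), ?_, ?_⟩
    · rw [hfi2, hfo1, ← List.filter_append, ← List.filter_append, heq1]
    · rw [hfo2, hfi1, ← List.filter_append, ← List.filter_append, heq2]

end BangTensor
end

section
/- If G and H are !-tensor expressions with G ≡ H, then Wk_A^K(G) ≡ Wk_A^K(H) (whenever both weakenings are well-formed); hence weakening lifts to an operation on !-tensors (≡-classes). -/
namespace BangTensor

open Pretensor

variable {σ : Type}

namespace EdgeTerm

lemma crO_self (e : EdgeTerm) {b c : EdgeName} (h : b ≠ c) :
    (e.renameOut b c).count (.out b) = 0 := by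
  induction e with
  | eps => rfl
  | edge d =>
    rcases d with a | a
    · by_cases hab : a = b <;> simp [renameOut, count, hab, h, Ne.symm h]
    · simp [renameOut, count]
  | cw e A ih => simpa [renameOut, count] using ih
  | acw e A ih => simpa [renameOut, count] using ih
  | cat e f ih1 ih2 => simp [renameOut, count, ih1, ih2]

lemma crO_target (e : EdgeTerm) {b c : EdgeName} (h : b ≠ c) :
    (e.renameOut b c).count (.out c) = e.count (.out b) + e.count (.out c) := by
  induction e with
  | eps => rfl
  | edge d =>
    rcases d with a | a
    · by_cases hab : a = b <;> by_cases hac : a = c <;>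
        simp [renameOut, count, hab, hac, h, Ne.symm h] <;> omega
    · simp [renameOut, count]
  | cw e A ih => simpa [renameOut, count] using ih
  | acw e A ih => simpa [renameOut, count] using ih
  | cat e f ih1 ih2 => simp [renameOut, count, ih1, ih2]; omega

lemma crO_other (e : EdgeTerm) {b c : EdgeName} (d : DirEdge)
    (h1 : d ≠ .out b) (h2 : d ≠ .out c) :
    (e.renameOut b c).count d = e.count d := by
  induction e with
  | eps => rfl
  | edge d' =>
    rcases d' with a | a
    · by_cases hab : a = b <;> simp [renameOut, count, hab, Ne.symm h1, Ne.symm h2]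
    · simp [renameOut, count]
  | cw e A ih => simpa [renameOut, count] using ih
  | acw e A ih => simpa [renameOut, count] using ih
  | cat e f ih1 ih2 => simp [renameOut, count, ih1, ih2]

lemma crI_self (e : EdgeTerm) {b c : EdgeName} (h : b ≠ c) :
    (e.renameInp b c).count (.inp b) = 0 := by
  induction e with
  | eps => rfl
  | edge d =>
    rcases d with a | a
    · simp [renameInp, count]
    · by_cases hab : a = b <;> simp [renameInp, count, hab, h, Ne.symm h]
  | cw e A ih => simpa [renameInp, count] using ih
  | acw e A ih => simpa [renameInp, count] using ih
  | cat e f ih1 ih2 => simp [renameInp, count, ih1, ih2]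

lemma crI_target (e : EdgeTerm) {b c : EdgeName} (h : b ≠ c) :
    (e.renameInp b c).count (.inp c) = e.count (.inp b) + e.count (.inp c) := by
  induction e with
  | eps => rfl
  | edge d =>
    rcases d with a | a
    · simp [renameInp, count]
    · by_cases hab : a = b <;> by_cases hac : a = c <;>
        simp [renameInp, count, hab, hac, h, Ne.symm h] <;> omega
  | cw e A ih => simpa [renameInp, count] using ih
  | acw e A ih => simpa [renameInp, count] using ih
  | cat e f ih1 ih2 => simp [renameInp, count, ih1, ih2]; omega

lemma crI_other (e : EdgeTerm) {b c : EdgeName} (d : DirEdge)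
    (h1 : d ≠ .inp b) (h2 : d ≠ .inp c) :
    (e.renameInp b c).count d = e.count d := by
  induction e with
  | eps => rfl
  | edge d' =>
    rcases d' with a | a
    · simp [renameInp, count]
    · by_cases hab : a = b <;> simp [renameInp, count, hab, Ne.symm h1, Ne.symm h2]
  | cw e A ih => simpa [renameInp, count] using ih
  | acw e A ih => simpa [renameInp, count] using ih
  | cat e f ih1 ih2 => simp [renameInp, count, ih1, ih2]

lemma renameOut_eq_self (e : EdgeTerm) {b : EdgeName} (c : EdgeName)
    (h : e.count (.out b) = 0) : e.renameOut b c = e := by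
  induction e with
  | eps => rfl
  | edge d =>
    rcases d with a | a
    · simp [count] at h
      simp [renameOut, h]
    · rfl
  | cw e A ih => simp [count] at h; simp [renameOut, ih h]
  | acw e A ih => simp [count] at h; simp [renameOut, ih h]
  | cat e f ih1 ih2 =>
    simp [count] at h
    simp [renameOut, ih1 h.1, ih2 h.2]

lemma renameInp_eq_self (e : EdgeTerm) {b : EdgeName} (c : EdgeName)
    (h : e.count (.inp b) = 0) : e.renameInp b c = e := by
  induction e with
  | eps => rfl
  | edge d =>
    rcases d with a | a
    · rfl
    · simp [count] at h
      simp [renameInp, h]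
  | cw e A ih => simp [count] at h; simp [renameInp, ih h]
  | acw e A ih => simp [count] at h; simp [renameInp, ih h]
  | cat e f ih1 ih2 =>
    simp [count] at h
    simp [renameInp, ih1 h.1, ih2 h.2]

lemma renameOut_inv (e : EdgeTerm) {b c : EdgeName}
    (h : e.count (.out c) = 0) : (e.renameOut b c).renameOut c b = e := by
  induction e with
  | eps => rfl
  | edge d =>
    rcases d with a | a
    · simp [count] at h
      by_cases hab : a = b <;> simp [renameOut, hab, h]
    · rfl
  | cw e A ih => simp [count] at h; simp [renameOut, ih h]
  | acw e A ih => simp [count] at h; simp [renameOut, ih h]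
  | cat e f ih1 ih2 =>
    simp [count] at h
    simp [renameOut, ih1 h.1, ih2 h.2]

lemma renameInp_inv (e : EdgeTerm) {b c : EdgeName}
    (h : e.count (.inp c) = 0) : (e.renameInp b c).renameInp c b = e := by
  induction e with
  | eps => rfl
  | edge d =>
    rcases d with a | a
    · rfl
    · simp [count] at h
      by_cases hab : a = b <;> simp [renameInp, hab, h]
  | cw e A ih => simp [count] at h; simp [renameInp, ih h]
  | acw e A ih => simp [count] at h; simp [renameInp, ih h]
  | cat e f ih1 ih2 =>
    simp [count] at h
    simp [renameInp, ih1 h.1, ih2 h.2]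

lemma mem_edgeNames_iff (e : EdgeTerm) (n : EdgeName) :
    n ∈ e.edgeNames ↔ e.count (.out n) ≠ 0 ∨ e.count (.inp n) ≠ 0 := by
  induction e with
  | eps => simp [edgeNames, count]
  | edge d =>
    rcases d with a | a <;>
    · simp only [edgeNames, count, DirEdge.name, Set.mem_singleton_iff]
      by_cases h : n = a
      · simp [h]
      · simp [h, Ne.symm h]
  | cw e A ih => simpa [edgeNames, count] using ih
  | acw e A ih => simpa [edgeNames, count] using ih
  | cat e f ih1 ih2 =>
    simp [edgeNames, count, ih1, ih2]
    tauto

lemma edgeNames_finite (e : EdgeTerm) : e.edgeNames.Finite := by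
  induction e with
  | eps => simp [edgeNames]
  | edge d => simp [edgeNames]
  | cw e A ih => simpa [edgeNames] using ih
  | acw e A ih => simpa [edgeNames] using ih
  | cat e f ih1 ih2 => exact (Set.Finite.union ih1 ih2).subset (by simp [edgeNames])

lemma rename_eq_self (e : EdgeTerm) {f : EdgeName → EdgeName}
    (h : ∀ x ∈ e.edgeNames, f x = x) : e.rename f id = e := by
  induction e with
  | eps => rfl
  | edge d =>
    rcases d with a | a <;>
      simp [rename, DirEdge.rename, h a (by simp [edgeNames, DirEdge.name])]
  | cw e A ih =>
    simp only [rename, id]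
    rw [ih (fun x hx => h x (by simpa [edgeNames] using hx))]
  | acw e A ih =>
    simp only [rename, id]
    rw [ih (fun x hx => h x (by simpa [edgeNames] using hx))]
  | cat e g ih1 ih2 =>
    simp only [rename]
    rw [ih1 (fun x hx => h x (by simp [edgeNames, hx])),
        ih2 (fun x hx => h x (by simp [edgeNames, hx]))]

lemma count_le_rename (e : EdgeTerm) (f : EdgeName → EdgeName) (d : DirEdge) :
    e.count d ≤ (e.rename f id).count (d.rename f) := by
  induction e with
  | eps => simp [count]
  | edge d' =>
    by_cases hd : d' = d
    · subst hd
      simp [rename, count]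
    · simp [rename, count, hd]
  | cw e A ih => simpa [rename, count] using ih
  | acw e A ih => simpa [rename, count] using ih
  | cat e g ih1 ih2 => simp [rename, count]; omega

end EdgeTerm

namespace Pretensor

lemma crO_self (X : Pretensor σ) {b c : EdgeName} (h : b ≠ c) :
    (X.renameOut b c).edgeCount (.out b) = 0 := by
  induction X with
  | unit => rfl
  | idt a y =>
    simp only [renameOut, edgeCount]
    split_ifs <;> simp_all <;> omega
  | gen φ e => simpa [renameOut, edgeCount] using EdgeTerm.crO_self e h
  | box G B ih => simpa [renameOut, edgeCount] using ih
  | prod G H ih1 ih2 => simp [renameOut, edgeCount, ih1, ih2]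

lemma crO_target (X : Pretensor σ) {b c : EdgeName} (h : b ≠ c) :
    (X.renameOut b c).edgeCount (.out c) =
      X.edgeCount (.out b) + X.edgeCount (.out c) := by
  induction X with
  | unit => rfl
  | idt a y =>
    simp only [renameOut, edgeCount]
    split_ifs <;> simp_all <;> omega
  | gen φ e => simpa [renameOut, edgeCount] using EdgeTerm.crO_target e h
  | box G B ih => simpa [renameOut, edgeCount] using ih
  | prod G H ih1 ih2 => simp [renameOut, edgeCount, ih1, ih2]; omega

lemma crO_other (X : Pretensor σ) {b c : EdgeName} (d : DirEdge)
    (h1 : d ≠ .out b) (h2 : d ≠ .out c) :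
    (X.renameOut b c).edgeCount d = X.edgeCount d := by
  induction X with
  | unit => rfl
  | idt a y =>
    simp only [renameOut, edgeCount]
    split_ifs <;> simp_all
  | gen φ e => simpa [renameOut, edgeCount] using EdgeTerm.crO_other e d h1 h2
  | box G B ih => simpa [renameOut, edgeCount] using ih
  | prod G H ih1 ih2 => simp [renameOut, edgeCount, ih1, ih2]

lemma crI_self (X : Pretensor σ) {b c : EdgeName} (h : b ≠ c) :
    (X.renameInp b c).edgeCount (.inp b) = 0 := by
  induction X with
  | unit => rfl
  | idt a y =>
    simp only [renameInp, edgeCount]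
    split_ifs <;> simp_all <;> omega
  | gen φ e => simpa [renameInp, edgeCount] using EdgeTerm.crI_self e h
  | box G B ih => simpa [renameInp, edgeCount] using ih
  | prod G H ih1 ih2 => simp [renameInp, edgeCount, ih1, ih2]

lemma crI_target (X : Pretensor σ) {b c : EdgeName} (h : b ≠ c) :
    (X.renameInp b c).edgeCount (.inp c) =
      X.edgeCount (.inp b) + X.edgeCount (.inp c) := by
  induction X with
  | unit => rfl
  | idt a y =>
    simp only [renameInp, edgeCount]
    split_ifs <;> simp_all <;> omega
  | gen φ e => simpa [renameInp, edgeCount] using EdgeTerm.crI_target e h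
  | box G B ih => simpa [renameInp, edgeCount] using ih
  | prod G H ih1 ih2 => simp [renameInp, edgeCount, ih1, ih2]; omega

lemma crI_other (X : Pretensor σ) {b c : EdgeName} (d : DirEdge)
    (h1 : d ≠ .inp b) (h2 : d ≠ .inp c) :
    (X.renameInp b c).edgeCount d = X.edgeCount d := by
  induction X with
  | unit => rfl
  | idt a y =>
    simp only [renameInp, edgeCount]
    split_ifs <;> simp_all
  | gen φ e => simpa [renameInp, edgeCount] using EdgeTerm.crI_other e d h1 h2
  | box G B ih => simpa [renameInp, edgeCount] using ih
  | prod G H ih1 ih2 => simp [renameInp, edgeCount, ih1, ih2]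

lemma renameOut_eq_self (X : Pretensor σ) {b : EdgeName} (c : EdgeName)
    (h : X.edgeCount (.out b) = 0) : X.renameOut b c = X := by
  induction X with
  | unit => rfl
  | idt a y =>
    have hne : a ≠ b := by rintro rfl; simp [edgeCount] at h
    simp [renameOut, hne]
  | gen φ e =>
    simp [edgeCount] at h
    simp [renameOut, EdgeTerm.renameOut_eq_self e c h]
  | box G B ih => simp [edgeCount] at h; simp [renameOut, ih h]
  | prod G H ih1 ih2 =>
    simp [edgeCount] at h
    simp [renameOut, ih1 h.1, ih2 h.2]

lemma renameInp_eq_self (X : Pretensor σ) {b : EdgeName} (c : EdgeName)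
    (h : X.edgeCount (.inp b) = 0) : X.renameInp b c = X := by
  induction X with
  | unit => rfl
  | idt a y =>
    have hne : y ≠ b := by rintro rfl; simp [edgeCount] at h
    simp [renameInp, hne]
  | gen φ e =>
    simp [edgeCount] at h
    simp [renameInp, EdgeTerm.renameInp_eq_self e c h]
  | box G B ih => simp [edgeCount] at h; simp [renameInp, ih h]
  | prod G H ih1 ih2 =>
    simp [edgeCount] at h
    simp [renameInp, ih1 h.1, ih2 h.2]

lemma renameOut_inv (X : Pretensor σ) {b c : EdgeName}
    (h : X.edgeCount (.out c) = 0) : (X.renameOut b c).renameOut c b = X := by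
  induction X with
  | unit => rfl
  | idt a y =>
    have hac : a ≠ c := by rintro rfl; simp [edgeCount] at h
    by_cases hab : a = b <;> simp [renameOut, hab, hac]
  | gen φ e =>
    simp [edgeCount] at h
    simp [renameOut, EdgeTerm.renameOut_inv e h]
  | box G B ih => simp [edgeCount] at h; simp [renameOut, ih h]
  | prod G H ih1 ih2 =>
    simp [edgeCount] at h
    simp [renameOut, ih1 h.1, ih2 h.2]

lemma renameInp_inv (X : Pretensor σ) {b c : EdgeName}
    (h : X.edgeCount (.inp c) = 0) : (X.renameInp b c).renameInp c b = X := by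
  induction X with
  | unit => rfl
  | idt a y =>
    have hyc : y ≠ c := by rintro rfl; simp [edgeCount] at h
    by_cases hyb : y = b <;> simp [renameInp, hyb, hyc]
  | gen φ e =>
    simp [edgeCount] at h
    simp [renameInp, EdgeTerm.renameInp_inv e h]
  | box G B ih => simp [edgeCount] at h; simp [renameInp, ih h]
  | prod G H ih1 ih2 =>
    simp [edgeCount] at h
    simp [renameInp, ih1 h.1, ih2 h.2]

lemma mem_edgeNames_iff (X : Pretensor σ) (n : EdgeName) :
    n ∈ X.edgeNames ↔ X.edgeCount (.out n) ≠ 0 ∨ X.edgeCount (.inp n) ≠ 0 := by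
  induction X with
  | unit => simp [edgeNames, edgeCount]
  | idt a y =>
    simp only [edgeNames, edgeCount, Set.mem_insert_iff, Set.mem_singleton_iff]
    split_ifs <;> simp_all
  | gen φ e => simpa [edgeNames, edgeCount] using EdgeTerm.mem_edgeNames_iff e n
  | box G B ih => simpa [edgeNames, edgeCount] using ih
  | prod G H ih1 ih2 =>
    simp [edgeNames, edgeCount, ih1, ih2]
    tauto

lemma edgeNames_finite (X : Pretensor σ) : X.edgeNames.Finite := by
  induction X with
  | unit => simp [edgeNames]
  | idt a y => simp [edgeNames]
  | gen φ e => simpa [edgeNames] using EdgeTerm.edgeNames_finite e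
  | box G B ih => simpa [edgeNames] using ih
  | prod G H ih1 ih2 => exact (Set.Finite.union ih1 ih2).subset (by simp [edgeNames])

lemma rename_eq_self (X : Pretensor σ) {f : EdgeName → EdgeName}
    (h : ∀ x ∈ X.edgeNames, f x = x) : X.rename f id = X := by
  induction X with
  | unit => rfl
  | idt a y =>
    simp [rename, h a (by simp [edgeNames]), h y (by simp [edgeNames])]
  | gen φ e =>
    simp [rename, EdgeTerm.rename_eq_self e (fun x hx => h x (by simpa [edgeNames] using hx))]
  | box G B ih =>
    simp only [rename, id]
    rw [ih (fun x hx => h x (by simpa [edgeNames] using hx))]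
  | prod G H ih1 ih2 =>
    simp only [rename]
    rw [ih1 (fun x hx => h x (by simp [edgeNames, hx])),
        ih2 (fun x hx => h x (by simp [edgeNames, hx]))]

lemma count_le_rename (X : Pretensor σ) (f : EdgeName → EdgeName) (d : DirEdge) :
    X.edgeCount d ≤ (X.rename f id).edgeCount (d.rename f) := by
  induction X with
  | unit => simp [edgeCount]
  | idt a y =>
    have h1 : (if d = DirEdge.out a then 1 else 0) ≤
        (if d.rename f = DirEdge.out (f a) then 1 else 0) := by
      by_cases hd : d = DirEdge.out a
      · subst hd; simp [DirEdge.rename]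
      · simp [hd]
    have h2 : (if d = DirEdge.inp y then 1 else 0) ≤
        (if d.rename f = DirEdge.inp (f y) then 1 else 0) := by
      by_cases hd : d = DirEdge.inp y
      · subst hd; simp [DirEdge.rename]
      · simp [hd]
    simpa [rename, edgeCount] using Nat.add_le_add h1 h2
  | gen φ e => simpa [rename, edgeCount] using EdgeTerm.count_le_rename e f d
  | box G B ih => simpa [rename, edgeCount] using ih
  | prod G H ih1 ih2 => simp [rename, edgeCount]; omega


@[simp] lemma wk_unit {A : BoxName} {K : Pretensor σ} :
    wk A K (unit : Pretensor σ) = unit := rfl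
@[simp] lemma wk_idt {A : BoxName} {K : Pretensor σ} (a b : EdgeName) :
    wk A K (idt a b) = idt a b := rfl
@[simp] lemma wk_gen {A : BoxName} {K : Pretensor σ} (φ : σ) (e : EdgeTerm) :
    wk A K (gen φ e) = gen φ e := rfl
@[simp] lemma wk_prod {A : BoxName} {K G H : Pretensor σ} :
    wk A K (prod G H) = prod (wk A K G) (wk A K H) := rfl
lemma wk_box {A : BoxName} {K G : Pretensor σ} {B : BoxName} :
    wk A K (box G B) = if B = A then box (prod G K) B else box (wk A K G) B := rfl

/-- Number of `K`-insertions `wk A K` performs. -/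
def acountA (A : BoxName) : Pretensor σ → ℕ
  | .unit => 0
  | .idt _ _ => 0
  | .gen _ _ => 0
  | .box G B => if B = A then 1 else acountA A G
  | .prod G H => acountA A G + acountA A H

lemma count_wk (A : BoxName) (K X : Pretensor σ) (d : DirEdge) :
    (wk A K X).edgeCount d = X.edgeCount d + acountA A X * K.edgeCount d := by
  induction X with
  | unit => simp [acountA, edgeCount]
  | idt a b => simp [acountA, edgeCount]
  | gen φ e => simp [acountA, edgeCount]
  | box G B ih =>
    by_cases hBA : B = A
    · simp [wk_box, hBA, acountA, edgeCount]
    · simp [wk_box, hBA, acountA, edgeCount, ih]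
  | prod G H ih1 ih2 =>
    simp [acountA, edgeCount, ih1, ih2]
    ring

lemma wk_eq_self (A : BoxName) (K : Pretensor σ) {X : Pretensor σ}
    (h : acountA A X = 0) : wk A K X = X := by
  induction X with
  | unit => rfl
  | idt a b => rfl
  | gen φ e => rfl
  | box G B ih =>
    by_cases hBA : B = A
    · simp [acountA, hBA] at h
    · simp [acountA, hBA] at h
      simp [wk_box, hBA, ih h]
  | prod G H ih1 ih2 =>
    simp [acountA] at h
    simp [ih1 h.1, ih2 h.2]

lemma renameOut_wk (A : BoxName) (K X : Pretensor σ) (b c : EdgeName) :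
    (wk A K X).renameOut b c = wk A (K.renameOut b c) (X.renameOut b c) := by
  induction X with
  | unit => rfl
  | idt a y => rfl
  | gen φ e => rfl
  | box G B ih =>
    by_cases hBA : B = A <;> simp [wk_box, hBA, renameOut, ih]
  | prod G H ih1 ih2 => simp [renameOut, ih1, ih2]

lemma renameInp_wk (A : BoxName) (K X : Pretensor σ) (b c : EdgeName) :
    (wk A K X).renameInp b c = wk A (K.renameInp b c) (X.renameInp b c) := by
  induction X with
  | unit => rfl
  | idt a y => rfl
  | gen φ e => rfl
  | box G B ih =>
    by_cases hBA : B = A <;> simp [wk_box, hBA, renameInp, ih]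
  | prod G H ih1 ih2 => simp [renameInp, ih1, ih2]

lemma rename_wk (A : BoxName) (K X : Pretensor σ) (f : EdgeName → EdgeName) :
    (wk A K X).rename f id = wk A (K.rename f id) (X.rename f id) := by
  induction X with
  | unit => rfl
  | idt a y => rfl
  | gen φ e => rfl
  | box G B ih =>
    by_cases hBA : B = A <;> simp [wk_box, hBA, rename, ih]
  | prod G H ih1 ih2 => simp [rename, ih1, ih2]

@[simp] lemma acountA_renameOut (A : BoxName) (X : Pretensor σ) (b c : EdgeName) :
    acountA A (X.renameOut b c) = acountA A X := by
  induction X with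
  | unit => rfl
  | idt a y => rfl
  | gen φ e => rfl
  | box G B ih => simp [renameOut, acountA, ih]
  | prod G H ih1 ih2 => simp [renameOut, acountA, ih1, ih2]

@[simp] lemma acountA_renameInp (A : BoxName) (X : Pretensor σ) (b c : EdgeName) :
    acountA A (X.renameInp b c) = acountA A X := by
  induction X with
  | unit => rfl
  | idt a y => rfl
  | gen φ e => rfl
  | box G B ih => simp [renameInp, acountA, ih]
  | prod G H ih1 ih2 => simp [renameInp, acountA, ih1, ih2]

@[simp] lemma acountA_rename (A : BoxName) (X : Pretensor σ) (f : EdgeName → EdgeName) :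
    acountA A (X.rename f id) = acountA A X := by
  induction X with
  | unit => rfl
  | idt a y => rfl
  | gen φ e => rfl
  | box G B ih => simp [rename, acountA, ih]
  | prod G H ih1 ih2 => simp [rename, acountA, ih1, ih2]

lemma acountA_nest (A : BoxName) (L : List (Pretensor σ × BoxName)) {X Y : Pretensor σ}
    (h : acountA A X = acountA A Y) :
    acountA A (nest L X) = acountA A (nest L Y) := by
  induction L generalizing X Y with
  | nil => simpa [nest] using h
  | cons p rest ih =>
    simp only [nest]
    exact ih (by by_cases hp : p.2 = A <;> simp [acountA, hp, h])

lemma acountA_equiv (A : BoxName) {X Y : Pretensor σ} (h : Equiv X Y) :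
    acountA A X = acountA A Y := by
  induction h with
  | refl G => rfl
  | symm h ih => omega
  | trans h1 h2 ih1 ih2 => omega
  | prod_congr h1 h2 ih1 ih2 => simp [acountA, ih1, ih2]
  | box_congr B h ih => by_cases hBA : B = A <;> simp [acountA, hBA, ih]
  | gen_congr φ h => rfl
  | prod_assoc G H K => simp [acountA]; ring
  | prod_comm G H => simp [acountA]; ring
  | prod_unit G => simp [acountA]
  | bound_rename G a c h1 h2 h3 => simp [renameEdgeName]
  | contract_inp G L a b h1 h2 =>
    simp only [acountA, acountA_renameInp]
    have := acountA_nest (σ := σ) A L (X := idt b a) (Y := unit) (by simp [acountA])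
    omega
  | contract_out H L a b h1 h2 =>
    simp only [acountA, acountA_renameOut]
    have := acountA_nest (σ := σ) A L (X := idt a b) (Y := unit) (by simp [acountA])
    omega

lemma nest_concat (L : List (Pretensor σ × BoxName)) (p : Pretensor σ × BoxName)
    (X : Pretensor σ) :
    nest (L ++ [p]) X = box (prod p.1 (nest L X)) p.2 := by
  induction L generalizing X with
  | nil => rfl
  | cons q rest ih => simpa [nest] using ih (box (prod q.1 X) q.2)

/-- Weaken the components of a (reversed, outermost-first) nesting list. -/
def wkLrev (A : BoxName) (K : Pretensor σ) :
    List (Pretensor σ × BoxName) → List (Pretensor σ × BoxName)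
  | [] => []
  | (P, B) :: rest =>
      if B = A then (prod P K, A) :: rest else (wk A K P, B) :: wkLrev A K rest

/-- Weaken a nesting list. -/
def wkList (A : BoxName) (K : Pretensor σ) (L : List (Pretensor σ × BoxName)) :
    List (Pretensor σ × BoxName) := (wkLrev A K L.reverse).reverse

lemma equiv_prod_rot (P X K : Pretensor σ) :
    Equiv (prod (prod P X) K) (prod (prod P K) X) :=
  ((Equiv.prod_assoc P X K).trans
    (Equiv.prod_congr (Equiv.refl P) (Equiv.prod_comm X K))).trans
    (Equiv.prod_assoc P K X).symm

lemma nestwk (A : BoxName) (K : Pretensor σ) (L : List (Pretensor σ × BoxName))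
    {X : Pretensor σ} (hX : wk A K X = X) :
    Equiv (wk A K (nest L X)) (nest (wkList A K L) X) := by
  induction L using List.reverseRecOn with
  | nil =>
    simp only [wkList, wkLrev, nest, List.reverse_nil]
    rw [hX]
    exact Equiv.refl _
  | append_singleton L0 p ih =>
    rcases p with ⟨P, B⟩
    rw [nest_concat]
    by_cases hBA : B = A
    · have hL : wkList A K (L0 ++ [(P, B)]) = L0 ++ [(prod P K, A)] := by
        simp [wkList, wkLrev, hBA]
      rw [hL, nest_concat, wk_box, if_pos hBA, hBA]
      exact Equiv.box_congr A (equiv_prod_rot P (nest L0 X) K)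
    · have hL : wkList A K (L0 ++ [(P, B)]) = wkList A K L0 ++ [(wk A K P, B)] := by
        simp [wkList, wkLrev, hBA]
      rw [hL, nest_concat, wk_box, if_neg hBA, wk_prod]
      exact Equiv.box_congr B (Equiv.prod_congr (Equiv.refl _) ih)

lemma step_out (A : BoxName) (Kc X : Pretensor σ) {n n' : EdgeName}
    (hm : acountA A X ≠ 0) (hcnt : Kc.edgeCount (.out n) ≠ 0)
    (hn'X : n' ∉ X.edgeNames) (hn'K : n' ∉ Kc.edgeNames) :
    Equiv (wk A Kc X) (prod (wk A (Kc.renameOut n n') X) (idt n n')) := by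
  have hnn' : n ≠ n' := by
    rintro rfl; exact hn'K ((mem_edgeNames_iff Kc n).2 (Or.inl hcnt))
  have hXout : X.edgeCount (.out n') = 0 := by
    by_contra hc; exact hn'X ((mem_edgeNames_iff X n').2 (Or.inl hc))
  have hXinp : X.edgeCount (.inp n') = 0 := by
    by_contra hc; exact hn'X ((mem_edgeNames_iff X n').2 (Or.inr hc))
  have hKout : Kc.edgeCount (.out n') = 0 := by
    by_contra hc; exact hn'K ((mem_edgeNames_iff Kc n').2 (Or.inl hc))
  have hKinp : Kc.edgeCount (.inp n') = 0 := by
    by_contra hc; exact hn'K ((mem_edgeNames_iff Kc n').2 (Or.inr hc))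
  have h1 : (wk A (Kc.renameOut n n') X).occursDir (.out n') := by
    show (wk A (Kc.renameOut n n') X).edgeCount (.out n') ≠ 0
    rw [count_wk, crO_target Kc hnn', hXout, hKout]
    simp [Nat.mul_eq_zero, hm, hcnt]
  have h2 : ¬ (wk A (Kc.renameOut n n') X).occursDir (.inp n') := by
    show ¬ (wk A (Kc.renameOut n n') X).edgeCount (.inp n') ≠ 0
    rw [count_wk, hXinp, crO_other Kc (.inp n') (by simp) (by simp), hKinp]
    simp
  have hback : (wk A (Kc.renameOut n n') X).renameOut n' n = wk A Kc X := by
    rw [renameOut_wk, renameOut_inv Kc hKout, renameOut_eq_self X n hXout]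
  have hc := Equiv.contract_out (wk A (Kc.renameOut n n') X) [] n n' h1 h2
  rw [show nest ([] : List (Pretensor σ × BoxName)) (idt n n') = idt n n' from rfl,
      show nest ([] : List (Pretensor σ × BoxName)) unit = unit from rfl, hback] at hc
  exact (Equiv.prod_unit (wk A Kc X)).symm.trans hc.symm

lemma step_inp (A : BoxName) (Kc X : Pretensor σ) {n n' : EdgeName}
    (hm : acountA A X ≠ 0) (hcnt : Kc.edgeCount (.inp n) ≠ 0)
    (hn'X : n' ∉ X.edgeNames) (hn'K : n' ∉ Kc.edgeNames) :
    Equiv (wk A Kc X) (prod (wk A (Kc.renameInp n n') X) (idt n' n)) := by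
  have hnn' : n ≠ n' := by
    rintro rfl; exact hn'K ((mem_edgeNames_iff Kc n).2 (Or.inr hcnt))
  have hXout : X.edgeCount (.out n') = 0 := by
    by_contra hc; exact hn'X ((mem_edgeNames_iff X n').2 (Or.inl hc))
  have hXinp : X.edgeCount (.inp n') = 0 := by
    by_contra hc; exact hn'X ((mem_edgeNames_iff X n').2 (Or.inr hc))
  have hKout : Kc.edgeCount (.out n') = 0 := by
    by_contra hc; exact hn'K ((mem_edgeNames_iff Kc n').2 (Or.inl hc))
  have hKinp : Kc.edgeCount (.inp n') = 0 := by
    by_contra hc; exact hn'K ((mem_edgeNames_iff Kc n').2 (Or.inr hc))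
  have h1 : (wk A (Kc.renameInp n n') X).occursDir (.inp n') := by
    show (wk A (Kc.renameInp n n') X).edgeCount (.inp n') ≠ 0
    rw [count_wk, crI_target Kc hnn', hXinp, hKinp]
    simp [Nat.mul_eq_zero, hm, hcnt]
  have h2 : ¬ (wk A (Kc.renameInp n n') X).occursDir (.out n') := by
    show ¬ (wk A (Kc.renameInp n n') X).edgeCount (.out n') ≠ 0
    rw [count_wk, hXout, crI_other Kc (.out n') (by simp) (by simp), hKout]
    simp
  have hback : (wk A (Kc.renameInp n n') X).renameInp n' n = wk A Kc X := by
    rw [renameInp_wk, renameInp_inv Kc hKinp, renameInp_eq_self X n hXinp]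
  have hc := Equiv.contract_inp (wk A (Kc.renameInp n n') X) [] n n' h1 h2
  rw [show nest ([] : List (Pretensor σ × BoxName)) (idt n' n) = idt n' n from rfl,
      show nest ([] : List (Pretensor σ × BoxName)) unit = unit from rfl, hback] at hc
  exact (Equiv.prod_unit (wk A Kc X)).symm.trans hc.symm


lemma exists_fresh (S : Set EdgeName) (hS : S.Finite) : ∃ n : EdgeName, n ∉ S := by
  rcases hS.infinite_compl.nonempty with ⟨n, hn⟩
  exact ⟨n, hn⟩

/-- Number of "public" name-directions of `Kc` within the universe `U`. -/
def wkMeasure (U : Finset EdgeName) (Kc : Pretensor σ) : ℕ :=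
  (U.filter fun n => Kc.edgeCount (.out n) ≠ 0).card +
    (U.filter fun n => Kc.edgeCount (.inp n) ≠ 0).card

lemma conv2 (A : BoxName) {G H : Pretensor σ}
    (hmG : acountA A G ≠ 0) (hmH : acountA A H ≠ 0)
    (U : Finset EdgeName)
    (hUG : ∀ x ∈ G.edgeNames, x ∈ U) (hUH : ∀ x ∈ H.edgeNames, x ∈ U)
    (HM : ∀ K' : Pretensor σ, (∀ x ∈ K'.edgeNames, x ∉ U) →
      Equiv (wk A K' G) (wk A K' H))
    (Kc : Pretensor σ) : Equiv (wk A Kc G) (wk A Kc H) := by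
  have hbase : ∀ Kc : Pretensor σ, wkMeasure U Kc = 0 →
      Equiv (wk A Kc G) (wk A Kc H) := by
    intro Kc h0
    apply HM
    intro x hx hxU
    have h1 : (U.filter fun n => Kc.edgeCount (.out n) ≠ 0).card = 0 ∧
        (U.filter fun n => Kc.edgeCount (.inp n) ≠ 0).card = 0 := by
      simp only [wkMeasure] at h0; omega
    rcases (mem_edgeNames_iff Kc x).1 hx with hc | hc
    · have hpos : 0 < (U.filter fun n => Kc.edgeCount (.out n) ≠ 0).card :=
        Finset.card_pos.2 ⟨x, Finset.mem_filter.2 ⟨hxU, hc⟩⟩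
      omega
    · have hpos : 0 < (U.filter fun n => Kc.edgeCount (.inp n) ≠ 0).card :=
        Finset.card_pos.2 ⟨x, Finset.mem_filter.2 ⟨hxU, hc⟩⟩
      omega
  suffices haux : ∀ (N : ℕ) (Kc : Pretensor σ), wkMeasure U Kc ≤ N →
      Equiv (wk A Kc G) (wk A Kc H) from haux _ Kc le_rfl
  intro N
  induction N with
  | zero => exact fun Kc h0 => hbase Kc (Nat.le_zero.mp h0)
  | succ N ih =>
    intro Kc hKc
    by_cases h0 : wkMeasure U Kc = 0
    · exact hbase Kc h0
    obtain ⟨n', hn'⟩ := exists_fresh ((↑U ∪ G.edgeNames ∪ H.edgeNames) ∪ Kc.edgeNames)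
      (((U.finite_toSet.union (edgeNames_finite G)).union (edgeNames_finite H)).union
        (edgeNames_finite Kc))
    simp only [Set.mem_union, not_or] at hn'
    obtain ⟨⟨⟨hn'U, hn'G⟩, hn'H⟩, hn'K⟩ := hn'
    have hn'U' : n' ∉ U := hn'U
    have hnonempty : (U.filter fun n => Kc.edgeCount (.out n) ≠ 0).Nonempty ∨
        (U.filter fun n => Kc.edgeCount (.inp n) ≠ 0).Nonempty := by
      by_contra hno
      push_neg at hno
      obtain ⟨hno1, hno2⟩ := hno
      exact h0 (by simp [wkMeasure, hno1, hno2])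
    rcases hnonempty with ⟨n, hn⟩ | ⟨n, hn⟩
    · obtain ⟨hnU, hcnt⟩ := Finset.mem_filter.1 hn
      have hnn' : n ≠ n' := fun e => hn'U' (e ▸ hnU)
      have hfo : U.filter (fun m => (Kc.renameOut n n').edgeCount (.out m) ≠ 0)
          = (U.filter fun m => Kc.edgeCount (.out m) ≠ 0).erase n := by
        ext m
        simp only [Finset.mem_filter, Finset.mem_erase]
        constructor
        · rintro ⟨hmU, hm⟩
          have hmn : m ≠ n := by
            rintro rfl
            exact hm (crO_self Kc hnn')
          have hmn' : m ≠ n' := fun e => hn'U' (e ▸ hmU)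
          refine ⟨hmn, hmU, ?_⟩
          rwa [crO_other Kc (.out m) (by simpa using hmn) (by simpa using hmn')] at hm
        · rintro ⟨hmn, hmU, hm⟩
          have hmn' : m ≠ n' := fun e => hn'U' (e ▸ hmU)
          refine ⟨hmU, ?_⟩
          rwa [crO_other Kc (.out m) (by simpa using hmn) (by simpa using hmn')]
      have hfi : U.filter (fun m => (Kc.renameOut n n').edgeCount (.inp m) ≠ 0)
          = U.filter fun m => Kc.edgeCount (.inp m) ≠ 0 := by
        ext m
        simp only [Finset.mem_filter]
        rw [crO_other Kc (.inp m) (by simp) (by simp)]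
      have hdec : wkMeasure U (Kc.renameOut n n') ≤ N := by
        have hcard := Finset.card_erase_of_mem hn
        have hposn : 0 < (U.filter fun m => Kc.edgeCount (.out m) ≠ 0).card :=
          Finset.card_pos.2 ⟨n, hn⟩
        have e1 : wkMeasure U (Kc.renameOut n n')
            = ((U.filter fun m => Kc.edgeCount (.out m) ≠ 0).erase n).card
              + (U.filter fun m => Kc.edgeCount (.inp m) ≠ 0).card := by
          rw [wkMeasure, hfo, hfi]
        simp only [wkMeasure] at hKc
        rw [e1, hcard]
        omega
      have sG := step_out A Kc G hmG hcnt hn'G hn'K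
      have sH := step_out A Kc H hmH hcnt hn'H hn'K
      exact sG.trans ((Equiv.prod_congr (ih _ hdec) (Equiv.refl _)).trans sH.symm)
    · obtain ⟨hnU, hcnt⟩ := Finset.mem_filter.1 hn
      have hnn' : n ≠ n' := fun e => hn'U' (e ▸ hnU)
      have hfo : U.filter (fun m => (Kc.renameInp n n').edgeCount (.inp m) ≠ 0)
          = (U.filter fun m => Kc.edgeCount (.inp m) ≠ 0).erase n := by
        ext m
        simp only [Finset.mem_filter, Finset.mem_erase]
        constructor
        · rintro ⟨hmU, hm⟩
          have hmn : m ≠ n := by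
            rintro rfl
            exact hm (crI_self Kc hnn')
          have hmn' : m ≠ n' := fun e => hn'U' (e ▸ hmU)
          refine ⟨hmn, hmU, ?_⟩
          rwa [crI_other Kc (.inp m) (by simpa using hmn) (by simpa using hmn')] at hm
        · rintro ⟨hmn, hmU, hm⟩
          have hmn' : m ≠ n' := fun e => hn'U' (e ▸ hmU)
          refine ⟨hmU, ?_⟩
          rwa [crI_other Kc (.inp m) (by simpa using hmn) (by simpa using hmn')]
      have hfi : U.filter (fun m => (Kc.renameInp n n').edgeCount (.out m) ≠ 0)
          = U.filter fun m => Kc.edgeCount (.out m) ≠ 0 := by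
        ext m
        simp only [Finset.mem_filter]
        rw [crI_other Kc (.out m) (by simp) (by simp)]
      have hdec : wkMeasure U (Kc.renameInp n n') ≤ N := by
        have hcard := Finset.card_erase_of_mem hn
        have hposn : 0 < (U.filter fun m => Kc.edgeCount (.inp m) ≠ 0).card :=
          Finset.card_pos.2 ⟨n, hn⟩
        have e1 : wkMeasure U (Kc.renameInp n n')
            = (U.filter fun m => Kc.edgeCount (.out m) ≠ 0).card
              + ((U.filter fun m => Kc.edgeCount (.inp m) ≠ 0).erase n).card := by
          rw [wkMeasure, hfo, hfi]
        simp only [wkMeasure] at hKc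
        rw [e1, hcard]
        omega
      have sG := step_inp A Kc G hmG hcnt hn'G hn'K
      have sH := step_inp A Kc H hmH hcnt hn'H hn'K
      exact sG.trans ((Equiv.prod_congr (ih _ hdec) (Equiv.refl _)).trans sH.symm)


lemma wk_equiv_fresh (A : BoxName) {G H : Pretensor σ} (h : Equiv G H) :
    ∀ K' : Pretensor σ, (∀ x ∈ K'.edgeNames, x ∉ G.edgeNames ∧ x ∉ H.edgeNames) →
      Equiv (wk A K' G) (wk A K' H) := by
  induction h with
  | refl G => exact fun K' _ => Equiv.refl _
  | symm h ih =>
    exact fun K' hf => (ih K' (fun x hx => ⟨(hf x hx).2, (hf x hx).1⟩)).symm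
  | @trans G H' H h1 h2 ih1 ih2 =>
    intro K' _
    by_cases hm : acountA A G = 0
    · have hmH : acountA A H = 0 := by
        rw [← acountA_equiv A (h1.trans h2)]; exact hm
      rw [wk_eq_self A K' hm, wk_eq_self A K' hmH]
      exact h1.trans h2
    · have hmH : acountA A H ≠ 0 := by
        rw [← acountA_equiv A (h1.trans h2)]; exact hm
      have hfin : ((G.edgeNames ∪ H.edgeNames) ∪ H'.edgeNames).Finite :=
        ((edgeNames_finite G).union (edgeNames_finite H)).union (edgeNames_finite H')
      refine conv2 A hm hmH hfin.toFinset
        (fun x hx => hfin.mem_toFinset.2 (Or.inl (Or.inl hx)))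
        (fun x hx => hfin.mem_toFinset.2 (Or.inl (Or.inr hx)))
        (fun K'' hfr => ?_) K'
      have hsplit : ∀ x ∈ K''.edgeNames,
          x ∉ G.edgeNames ∧ x ∉ H.edgeNames ∧ x ∉ H'.edgeNames := by
        intro x hx
        have hxS := fun hs => hfr x hx (hfin.mem_toFinset.2 hs)
        refine ⟨fun hg => hxS (Or.inl (Or.inl hg)),
                fun hh => hxS (Or.inl (Or.inr hh)),
                fun hh' => hxS (Or.inr hh')⟩
      exact (ih1 K'' (fun x hx => ⟨(hsplit x hx).1, (hsplit x hx).2.2⟩)).trans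
        (ih2 K'' (fun x hx => ⟨(hsplit x hx).2.2, (hsplit x hx).2.1⟩))
  | @prod_congr G G' H H' h1 h2 ih1 ih2 =>
    intro K' hf
    have hf1 : ∀ x ∈ K'.edgeNames, x ∉ G.edgeNames ∧ x ∉ G'.edgeNames := by
      intro x hx
      obtain ⟨hl, hr⟩ := hf x hx
      simp only [edgeNames, Set.mem_union, not_or] at hl hr
      exact ⟨hl.1, hr.1⟩
    have hf2 : ∀ x ∈ K'.edgeNames, x ∉ H.edgeNames ∧ x ∉ H'.edgeNames := by
      intro x hx
      obtain ⟨hl, hr⟩ := hf x hx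
      simp only [edgeNames, Set.mem_union, not_or] at hl hr
      exact ⟨hl.2, hr.2⟩
    simp only [wk_prod]
    exact Equiv.prod_congr (ih1 K' hf1) (ih2 K' hf2)
  | @box_congr G G' B h1 ih =>
    intro K' hf
    by_cases hBA : B = A
    · rw [hBA, wk_box, wk_box, if_pos rfl, if_pos rfl]
      exact Equiv.box_congr A (Equiv.prod_congr h1 (Equiv.refl K'))
    · rw [wk_box, wk_box, if_neg hBA, if_neg hBA]
      exact Equiv.box_congr B (ih K' hf)
  | gen_congr φ h1 =>
    exact fun K' _ => Equiv.gen_congr φ h1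
  | prod_assoc G H K =>
    intro K' _
    simp only [wk_prod]
    exact Equiv.prod_assoc _ _ _
  | prod_comm G H =>
    intro K' _
    simp only [wk_prod]
    exact Equiv.prod_comm _ _
  | prod_unit G =>
    intro K' _
    simp only [wk_prod, wk_unit]
    exact Equiv.prod_unit _
  | bound_rename G a c hout hinp hcmem =>
    intro K' hf
    have hout' : G.edgeCount (.out a) ≠ 0 := hout
    have hinp' : G.edgeCount (.inp a) ≠ 0 := hinp
    have haG : a ∈ G.edgeNames := (mem_edgeNames_iff G a).2 (Or.inl hout')
    have haK : a ∉ K'.edgeNames := fun hx => (hf a hx).1 haG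
    have hcR : c ∈ (G.renameEdgeName a c).edgeNames := by
      apply (mem_edgeNames_iff _ c).2
      left
      have hle := count_le_rename G (fun x => if x = a then c else x) (.out a)
      simp [DirEdge.rename] at hle
      intro h0
      simp only [renameEdgeName] at h0
      rw [h0] at hle
      exact hout' (Nat.le_zero.mp hle)
    have hcK : c ∉ K'.edgeNames := fun hx => (hf c hx).2 hcR
    have hcG : c ∉ G.edgeNames := hcmem
    have hG0o : G.edgeCount (.out c) = 0 := by
      by_contra hc; exact hcG ((mem_edgeNames_iff G c).2 (Or.inl hc))
    have hG0i : G.edgeCount (.inp c) = 0 := by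
      by_contra hc; exact hcG ((mem_edgeNames_iff G c).2 (Or.inr hc))
    have hK0o : K'.edgeCount (.out c) = 0 := by
      by_contra hc; exact hcK ((mem_edgeNames_iff K' c).2 (Or.inl hc))
    have hK0i : K'.edgeCount (.inp c) = 0 := by
      by_contra hc; exact hcK ((mem_edgeNames_iff K' c).2 (Or.inr hc))
    have hKfix : K'.rename (fun x => if x = a then c else x) id = K' :=
      rename_eq_self K' (fun x hx => if_neg (by rintro rfl; exact haK hx))
    have hcomm : wk A K' (G.renameEdgeName a c) = (wk A K' G).renameEdgeName a c := by
      simp only [renameEdgeName]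
      rw [rename_wk, hKfix]
    rw [hcomm]
    apply Equiv.bound_rename
    · show (wk A K' G).edgeCount (.out a) ≠ 0
      rw [count_wk]
      omega
    · show (wk A K' G).edgeCount (.inp a) ≠ 0
      rw [count_wk]
      omega
    · intro hmem
      rcases (mem_edgeNames_iff _ c).1 hmem with hc0 | hc0
      · rw [count_wk, hG0o, hK0o, Nat.mul_zero] at hc0
        exact hc0 rfl
      · rw [count_wk, hG0i, hK0i, Nat.mul_zero] at hc0
        exact hc0 rfl
  | contract_inp G L a b hb hnb =>
    intro K' hf
    have hb' : G.edgeCount (.inp b) ≠ 0 := hb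
    have hnb' : G.edgeCount (.out b) = 0 := by
      by_contra hc; exact hnb hc
    have hbL : b ∈ (prod G (nest L (idt b a))).edgeNames := by
      apply (mem_edgeNames_iff _ b).2
      right
      simp only [edgeCount]
      omega
    have hbK : b ∉ K'.edgeNames := fun hx => (hf b hx).1 hbL
    have hKo : K'.edgeCount (.out b) = 0 := by
      by_contra hc; exact hbK ((mem_edgeNames_iff _ b).2 (Or.inl hc))
    have hKi : K'.edgeCount (.inp b) = 0 := by
      by_contra hc; exact hbK ((mem_edgeNames_iff _ b).2 (Or.inr hc))
    have h1 := nestwk A K' L (X := idt b a) rfl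
    have h2 := nestwk A K' L (X := unit) rfl
    have hcond1 : (wk A K' G).occursDir (.inp b) := by
      show (wk A K' G).edgeCount (.inp b) ≠ 0
      rw [count_wk]
      omega
    have hcond2 : ¬ (wk A K' G).occursDir (.out b) := by
      show ¬ (wk A K' G).edgeCount (.out b) ≠ 0
      rw [count_wk, hnb', hKo, Nat.mul_zero]
      simp
    have hcore := Equiv.contract_inp (wk A K' G) (wkList A K' L) a b hcond1 hcond2
    have hcomm : (wk A K' G).renameInp b a = wk A K' (G.renameInp b a) := by
      rw [renameInp_wk, renameInp_eq_self K' a hKi]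
    rw [hcomm] at hcore
    simp only [wk_prod]
    exact (Equiv.prod_congr (Equiv.refl _) h1).trans
      (hcore.trans (Equiv.prod_congr (Equiv.refl _) h2.symm))
  | contract_out H L a b hb hnb =>
    intro K' hf
    have hb' : H.edgeCount (.out b) ≠ 0 := hb
    have hnb' : H.edgeCount (.inp b) = 0 := by
      by_contra hc; exact hnb hc
    have hbL : b ∈ (prod H (nest L (idt a b))).edgeNames := by
      apply (mem_edgeNames_iff _ b).2
      left
      simp only [edgeCount]
      omega
    have hbK : b ∉ K'.edgeNames := fun hx => (hf b hx).1 hbL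
    have hKo : K'.edgeCount (.out b) = 0 := by
      by_contra hc; exact hbK ((mem_edgeNames_iff _ b).2 (Or.inl hc))
    have hKi : K'.edgeCount (.inp b) = 0 := by
      by_contra hc; exact hbK ((mem_edgeNames_iff _ b).2 (Or.inr hc))
    have h1 := nestwk A K' L (X := idt a b) rfl
    have h2 := nestwk A K' L (X := unit) rfl
    have hcond1 : (wk A K' H).occursDir (.out b) := by
      show (wk A K' H).edgeCount (.out b) ≠ 0
      rw [count_wk]
      omega
    have hcond2 : ¬ (wk A K' H).occursDir (.inp b) := by
      show ¬ (wk A K' H).edgeCount (.inp b) ≠ 0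
      rw [count_wk, hnb', hKi, Nat.mul_zero]
      simp
    have hcore := Equiv.contract_out (wk A K' H) (wkList A K' L) a b hcond1 hcond2
    have hcomm : (wk A K' H).renameOut b a = wk A K' (H.renameOut b a) := by
      rw [renameOut_wk, renameOut_eq_self K' a hKo]
    rw [hcomm] at hcore
    simp only [wk_prod]
    exact (Equiv.prod_congr (Equiv.refl _) h1).trans
      (hcore.trans (Equiv.prod_congr (Equiv.refl _) h2.symm))

end Pretensor

end BangTensor


namespace BangTensor

/-- If `G` and `H` are !-tensor expressions with `G ≡ H`, then
`Wk_A^K(G) ≡ Wk_A^K(H)` whenever both weakenings are well-formed; hence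
weakening lifts to an operation on !-tensors (`≡`-classes). -/
theorem wk_preserves_equiv {σ : Type} (G H K : Pretensor σ) (A : BoxName)
    (hG : Pretensor.IsTensorExpr G) (hH : Pretensor.IsTensorExpr H)
    (hwkG : Pretensor.IsTensorExpr (Pretensor.wk A K G))
    (hwkH : Pretensor.IsTensorExpr (Pretensor.wk A K H))
    (h : Pretensor.Equiv G H) :
    Pretensor.Equiv (Pretensor.wk A K G) (Pretensor.wk A K H) := by
  by_cases hm : Pretensor.acountA A G = 0
  · have hmH : Pretensor.acountA A H = 0 := by
      rw [← Pretensor.acountA_equiv A h]; exact hm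
    rw [Pretensor.wk_eq_self A K hm, Pretensor.wk_eq_self A K hmH]
    exact h
  · have hmH : Pretensor.acountA A H ≠ 0 := by
      rw [← Pretensor.acountA_equiv A h]; exact hm
    have hfin : (G.edgeNames ∪ H.edgeNames).Finite :=
      (Pretensor.edgeNames_finite G).union (Pretensor.edgeNames_finite H)
    exact Pretensor.conv2 A hm hmH hfin.toFinset
      (fun x hx => hfin.mem_toFinset.2 (Or.inl hx))
      (fun x hx => hfin.mem_toFinset.2 (Or.inr hx))
      (fun K'' hfr => Pretensor.wk_equiv_fresh A h K''
        (fun x hx => ⟨fun hg => hfr x hx (hfin.mem_toFinset.2 (Or.inl hg)),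
                      fun hh => hfr x hx (hfin.mem_toFinset.2 (Or.inr hh))⟩))
      K

end BangTensor
end

section
/- If G and H are compatible !-tensors (identical free edge names, the same !-box names with identical immediate-nesting relation, and equal contexts on all free edge names), then Wk_A^K(G) and Wk_A^K(H) are compatible !-tensors. -/
namespace BangTensor

namespace WkAux

open Pretensor

private lemma partner_partner (d : DirEdge) : d.partner.partner = d := by
  cases d <;> rfl

private lemma ectx_eq_none {e : EdgeTerm} {d : DirEdge} :
    e.ectx d = none ↔ e.count d = 0 := by
  induction e with
  | eps => simp [EdgeTerm.ectx, EdgeTerm.count]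
  | edge d' => by_cases h : d' = d <;> simp [EdgeTerm.ectx, EdgeTerm.count, h]
  | cw e A ih => simpa [EdgeTerm.ectx, EdgeTerm.count] using ih
  | acw e A ih => simpa [EdgeTerm.ectx, EdgeTerm.count] using ih
  | cat e f ih1 ih2 =>
    cases he : e.ectx d with
    | some v =>
      have : e.count d ≠ 0 := by
        intro h0
        rw [ih1.mpr h0] at he; exact nomatch he
      simp [EdgeTerm.ectx, EdgeTerm.count, he, Option.orElse, this]
    | none =>
      have h0 := ih1.mp he
      simp [EdgeTerm.ectx, EdgeTerm.count, he, Option.orElse, h0, ih2]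

private lemma ctx2_eq_none {σ : Type} {G : Pretensor σ} {d : DirEdge} :
    G.ctx2 d = none ↔ G.edgeCount d = 0 := by
  induction G with
  | unit => simp [Pretensor.ctx2, Pretensor.edgeCount]
  | idt a b =>
    by_cases h1 : d = DirEdge.out a <;> by_cases h2 : d = DirEdge.inp b <;>
      simp [Pretensor.ctx2, Pretensor.edgeCount, h1, h2]
  | gen φ e => simp [Pretensor.ctx2, Pretensor.edgeCount, ectx_eq_none]
  | box G A ih => simpa [Pretensor.ctx2, Pretensor.edgeCount] using ih
  | prod G H ihG ihH =>
    cases hg : G.ctx2 d with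
    | some v =>
      have : G.edgeCount d ≠ 0 := by
        intro h0; rw [ihG.mpr h0] at hg; exact nomatch hg
      simp [Pretensor.ctx2, Pretensor.edgeCount, hg, Option.orElse, this]
    | none =>
      have h0 := ihG.mp hg
      simp [Pretensor.ctx2, Pretensor.edgeCount, hg, Option.orElse, h0, ihH]

private lemma boxCtx_eq_none {σ : Type} {G : Pretensor σ} {B : BoxName} :
    G.boxCtx B = none ↔ G.boxCount B = 0 := by
  induction G with
  | unit => simp [Pretensor.boxCtx, Pretensor.boxCount]
  | idt a b => simp [Pretensor.boxCtx, Pretensor.boxCount]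
  | gen φ e => simp [Pretensor.boxCtx, Pretensor.boxCount]
  | box G C ih =>
    by_cases h : C = B <;> simp [Pretensor.boxCtx, Pretensor.boxCount, h, ih]
  | prod G H ihG ihH =>
    cases hg : G.boxCtx B with
    | some v =>
      have : G.boxCount B ≠ 0 := by
        intro h0; rw [ihG.mpr h0] at hg; exact nomatch hg
      simp [Pretensor.boxCtx, Pretensor.boxCount, hg, Option.orElse, this]
    | none =>
      have h0 := ihG.mp hg
      simp [Pretensor.boxCtx, Pretensor.boxCount, hg, Option.orElse, h0, ihH]

private lemma wk_eq_self {σ : Type} (A : BoxName) (K G : Pretensor σ)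
    (h : G.boxCount A = 0) : Pretensor.wk A K G = G := by
  induction G with
  | unit => rfl
  | idt a b => rfl
  | gen φ e => rfl
  | box G C ih =>
    simp [Pretensor.boxCount] at h
    rw [Pretensor.wk, if_neg h.1, ih h.2]
  | prod G H ihG ihH =>
    simp [Pretensor.boxCount, Nat.add_eq_zero] at h
    rw [Pretensor.wk, ihG h.1, ihH h.2]

private lemma edgeCount_wk {σ : Type} (A : BoxName) (K G : Pretensor σ)
    (hA : G.boxCount A ≤ 1) (d : DirEdge) :
    (Pretensor.wk A K G).edgeCount d = G.edgeCount d + G.boxCount A * K.edgeCount d := by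
  induction G with
  | unit => simp [Pretensor.wk, Pretensor.boxCount]
  | idt a b => simp [Pretensor.wk, Pretensor.boxCount, Pretensor.edgeCount]
  | gen φ e => simp [Pretensor.wk, Pretensor.boxCount]
  | box G C ih =>
    by_cases h : C = A
    · subst h
      simp [Pretensor.boxCount] at hA
      rw [Pretensor.wk, if_pos rfl]
      simp [Pretensor.edgeCount, Pretensor.boxCount, hA]
    · simp [Pretensor.boxCount, h] at hA
      rw [Pretensor.wk, if_neg h]
      simp [Pretensor.edgeCount, Pretensor.boxCount, h, ih hA]
  | prod G H ihG ihH =>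
    simp [Pretensor.boxCount] at hA
    rw [Pretensor.wk]
    simp only [Pretensor.edgeCount, Pretensor.boxCount,
      ihG (by omega), ihH (by omega), Nat.add_mul]
    omega

private lemma boxCount_wk {σ : Type} (A : BoxName) (K G : Pretensor σ)
    (hA : G.boxCount A ≤ 1) (B : BoxName) :
    (Pretensor.wk A K G).boxCount B = G.boxCount B + G.boxCount A * K.boxCount B := by
  induction G with
  | unit => simp [Pretensor.wk, Pretensor.boxCount]
  | idt a b => simp [Pretensor.wk, Pretensor.boxCount]
  | gen φ e => simp [Pretensor.wk, Pretensor.boxCount]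
  | box G C ih =>
    by_cases h : C = A
    · subst h
      simp [Pretensor.boxCount] at hA
      rw [Pretensor.wk, if_pos rfl]
      simp [Pretensor.boxCount, hA]
      omega
    · simp [Pretensor.boxCount, h] at hA
      rw [Pretensor.wk, if_neg h]
      simp [Pretensor.boxCount, h, ih hA]
      omega
  | prod G H ihG ihH =>
    simp [Pretensor.boxCount] at hA
    rw [Pretensor.wk]
    simp only [Pretensor.boxCount, ihG (by omega), ihH (by omega), Nat.add_mul]
    omega

private lemma boxCtx_wk {σ : Type} (A : BoxName) (K G : Pretensor σ)
    (hdis : ∀ B, G.boxCount B = 0 ∨ K.boxCount B = 0) (B : BoxName) :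
    (Pretensor.wk A K G).boxCtx B = (G.boxCtx B).orElse
      (fun _ => (G.boxCtx A).bind fun l => (K.boxCtx B).map (· ++ (A :: l))) := by
  induction G with
  | unit => simp [Pretensor.wk, Pretensor.boxCtx, Option.orElse]
  | idt a b => simp [Pretensor.wk, Pretensor.boxCtx, Option.orElse]
  | gen φ e => simp [Pretensor.wk, Pretensor.boxCtx, Option.orElse]
  | box G C ih =>
    by_cases hCA : C = A
    · subst hCA
      rw [Pretensor.wk, if_pos rfl]
      by_cases hBC : C = B
      · subst hBC
        simp [Pretensor.boxCtx, Option.orElse]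
      · simp only [Pretensor.boxCtx, if_neg hBC, if_pos rfl]
        cases hg : G.boxCtx B <;> cases hk : K.boxCtx B <;>
          simp [Pretensor.boxCtx, hg, hk, Option.orElse, Option.bind]
    · rw [Pretensor.wk, if_neg hCA]
      have hdis' : ∀ B, G.boxCount B = 0 ∨ K.boxCount B = 0 := by
        intro X
        rcases hdis X with h | h
        · left; simp [Pretensor.boxCount] at h; exact h.2
        · right; exact h
      by_cases hBC : C = B
      · subst hBC
        simp [Pretensor.boxCtx, Option.orElse]
      · simp only [Pretensor.boxCtx, if_neg hBC, if_neg hCA, ih hdis']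
        cases hg : G.boxCtx B with
        | some v => simp [Option.orElse]
        | none =>
          cases ha : G.boxCtx A with
          | none => simp [Option.orElse, Option.bind]
          | some l =>
            cases hk : K.boxCtx B with
            | none => simp [Option.orElse, Option.bind, hk]
            | some m => simp [Option.orElse, Option.bind, hk]
  | prod G H ihG ihH =>
    have hdG : ∀ B, G.boxCount B = 0 ∨ K.boxCount B = 0 := by
      intro X; rcases hdis X with h | h
      · left; simp [Pretensor.boxCount, Nat.add_eq_zero] at h; exact h.1
      · right; exact h
    have hdH : ∀ B, H.boxCount B = 0 ∨ K.boxCount B = 0 := by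
      intro X; rcases hdis X with h | h
      · left; simp [Pretensor.boxCount, Nat.add_eq_zero] at h; exact h.2
      · right; exact h
    rw [Pretensor.wk]
    simp only [Pretensor.boxCtx, ihG hdG, ihH hdH]
    cases hk : K.boxCtx B with
    | none =>
        cases hg : G.boxCtx B <;> cases hh : H.boxCtx B <;>
          cases ha : G.boxCtx A <;> cases hb : H.boxCtx A <;>
          simp [Option.orElse, Option.bind, hk]
    | some m =>
        have hKB : K.boxCount B ≠ 0 := by
          intro h0; rw [boxCtx_eq_none.mpr h0] at hk; exact nomatch hk
        have hGB : (Pretensor.prod G H).boxCount B = 0 := by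
          rcases hdis B with h | h
          · exact h
          · exact absurd h hKB
        simp [Pretensor.boxCount, Nat.add_eq_zero] at hGB
        rw [boxCtx_eq_none.mpr hGB.1, boxCtx_eq_none.mpr hGB.2]
        cases ha : G.boxCtx A <;> cases hb : H.boxCtx A <;>
          simp [Option.orElse, Option.bind, hk]

private lemma ctx2_wk {σ : Type} (A : BoxName) (K G : Pretensor σ)
    (hdis : ∀ d, G.edgeCount d = 0 ∨ K.edgeCount d = 0) (d : DirEdge) :
    (Pretensor.wk A K G).ctx2 d = (G.ctx2 d).orElse
      (fun _ => (G.boxCtx A).bind fun l => (K.ctx2 d).map fun p => (p.1, p.2 ++ (A :: l))) := by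
  induction G with
  | unit => simp [Pretensor.wk, Pretensor.ctx2, Pretensor.boxCtx, Option.orElse]
  | idt a b =>
    rcases h : (Pretensor.idt a b : Pretensor σ).ctx2 d with _ | v <;>
      simp [Pretensor.wk, Pretensor.boxCtx, h, Option.orElse, Option.bind]
  | gen φ e =>
    rcases h : (Pretensor.gen φ e : Pretensor σ).ctx2 d with _ | v <;>
      simp [Pretensor.wk, Pretensor.boxCtx, h, Option.orElse, Option.bind]
  | box G C ih =>
    by_cases hCA : C = A
    · subst hCA
      rw [Pretensor.wk, if_pos rfl]
      simp only [Pretensor.ctx2, Pretensor.boxCtx, if_pos rfl]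
      cases hg : G.ctx2 d <;> cases hk : K.ctx2 d <;>
        simp [hg, hk, Option.orElse, Option.bind]
    · rw [Pretensor.wk, if_neg hCA]
      simp only [Pretensor.ctx2, Pretensor.boxCtx, if_neg hCA, ih hdis]
      cases hg : G.ctx2 d with
      | some v => simp [Option.orElse]
      | none =>
        cases ha : G.boxCtx A with
        | none => simp [Option.orElse, Option.bind]
        | some l =>
          cases hk : K.ctx2 d with
          | none => simp [Option.orElse, Option.bind, hk]
          | some p => simp [Option.orElse, Option.bind, hk]
  | prod G H ihG ihH =>
    have hdG : ∀ x, G.edgeCount x = 0 ∨ K.edgeCount x = 0 := by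
      intro x; rcases hdis x with h | h
      · left; simp [Pretensor.edgeCount, Nat.add_eq_zero] at h; exact h.1
      · right; exact h
    have hdH : ∀ x, H.edgeCount x = 0 ∨ K.edgeCount x = 0 := by
      intro x; rcases hdis x with h | h
      · left; simp [Pretensor.edgeCount, Nat.add_eq_zero] at h; exact h.2
      · right; exact h
    rw [Pretensor.wk]
    simp only [Pretensor.ctx2, Pretensor.boxCtx, ihG hdG, ihH hdH]
    cases hk : K.ctx2 d with
    | none =>
        cases hg : G.ctx2 d <;> cases hh : H.ctx2 d <;>
          cases ha : G.boxCtx A <;> cases hb : H.boxCtx A <;>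
          simp [Option.orElse, Option.bind, hk]
    | some m =>
        have hKB : K.edgeCount d ≠ 0 := by
          intro h0; rw [ctx2_eq_none.mpr h0] at hk; exact nomatch hk
        have hGB : (Pretensor.prod G H).edgeCount d = 0 := by
          rcases hdis d with h | h
          · exact h
          · exact absurd h hKB
        simp [Pretensor.edgeCount, Nat.add_eq_zero] at hGB
        rw [ctx2_eq_none.mpr hGB.1, ctx2_eq_none.mpr hGB.2]
        cases ha : G.boxCtx A <;> cases hb : H.boxCtx A <;>
          simp [Option.orElse, Option.bind, hk]

private lemma boxCtx_parent {σ : Type} {G : Pretensor σ}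
    (hF2 : ∀ X, G.boxCount X ≤ 1) :
    ∀ {A B : BoxName} {l : List BoxName},
      G.boxCtx A = some (B :: l) → G.boxCtx B = some l := by
  induction G with
  | unit => intro A B l h; simp [Pretensor.boxCtx] at h
  | idt a b => intro A B l h; simp [Pretensor.boxCtx] at h
  | gen φ e => intro A B l h; simp [Pretensor.boxCtx] at h
  | box G C ih =>
    intro A B l h
    have hF2' : ∀ X, G.boxCount X ≤ 1 := by
      intro X; have := hF2 X; simp [Pretensor.boxCount] at this; omega
    by_cases hCA : C = A
    · subst hCA
      rw [Pretensor.boxCtx, if_pos rfl] at h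
      exact absurd (Option.some.inj h) (by simp)
    · rw [Pretensor.boxCtx, if_neg hCA] at h
      rcases Option.map_eq_some_iff.mp h with ⟨l', hl', hly⟩
      cases l' with
      | nil =>
        have h2 : C = B ∧ [] = l := by
          constructor
          · exact (List.cons.injEq _ _ _ _ ▸ hly :  C = B ∧ [] = l).1
          · exact (List.cons.injEq _ _ _ _ ▸ hly :  C = B ∧ [] = l).2
        obtain ⟨hC1, hC2⟩ := h2
        rw [Pretensor.boxCtx, if_pos hC1, hC2]
      | cons B' t =>
        rw [List.cons_append] at hly
        have h2 : B' = B ∧ t ++ [C] = l := by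
          constructor
          · exact (List.cons.injEq _ _ _ _ ▸ hly : B' = B ∧ t ++ [C] = l).1
          · exact (List.cons.injEq _ _ _ _ ▸ hly : B' = B ∧ t ++ [C] = l).2
        obtain ⟨hB, hl⟩ := h2
        have hGB := ih hF2' hl'
        have hCB : C ≠ B' := by
          intro hCB; subst hCB
          have h1 : G.boxCount C ≠ 0 := by
            intro h0; rw [boxCtx_eq_none.mpr h0] at hGB; exact nomatch hGB
          have := hF2 C
          simp [Pretensor.boxCount] at this
          omega
        rw [← hB, ← hl]
        rw [Pretensor.boxCtx, if_neg hCB, hGB]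
        rfl
  | prod G H ihG ihH =>
    intro A B l h
    have hF2G : ∀ X, G.boxCount X ≤ 1 := by
      intro X; have := hF2 X; simp [Pretensor.boxCount] at this; omega
    have hF2H : ∀ X, H.boxCount X ≤ 1 := by
      intro X; have := hF2 X; simp [Pretensor.boxCount] at this; omega
    rw [Pretensor.boxCtx] at h
    cases hg : G.boxCtx A with
    | some v =>
      rw [hg] at h
      simp [Option.orElse] at h
      subst h
      have hGB := ihG hF2G hg
      rw [Pretensor.boxCtx, hGB]
      rfl
    | none =>
      rw [hg] at h
      simp [Option.orElse] at h
      have hHB := ihH hF2H h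
      have hGB : G.boxCtx B = none := by
        by_contra h0
        cases hgb : G.boxCtx B with
        | none => exact h0 hgb
        | some v =>
          have h1 : G.boxCount B ≠ 0 := by
            intro h2; rw [boxCtx_eq_none.mpr h2] at hgb; exact nomatch hgb
          have h2 : H.boxCount B ≠ 0 := by
            intro h2; rw [boxCtx_eq_none.mpr h2] at hHB; exact nomatch hHB
          have := hF2 B
          simp [Pretensor.boxCount] at this
          omega
      rw [Pretensor.boxCtx, hGB, hHB]
      rfl

private lemma boxCtx_congr {σ : Type} {G H : Pretensor σ}
    (hF2G : ∀ X, G.boxCount X ≤ 1) (hF2H : ∀ X, H.boxCount X ≤ 1)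
    (hcount : ∀ X, G.boxCount X ≠ 0 ↔ H.boxCount X ≠ 0)
    (hprec : ∀ X Y, G.Prec X Y ↔ H.Prec X Y) :
    ∀ X, G.boxCtx X = H.boxCtx X := by
  have key : ∀ (l : List BoxName) (X : BoxName) (l' : List BoxName),
      G.boxCtx X = some l → H.boxCtx X = some l' → l = l' := by
    intro l
    induction l with
    | nil =>
      intro X l' hg hh
      cases l' with
      | nil => rfl
      | cons Y t =>
        have : G.Prec X Y := (hprec X Y).mpr ⟨t, hh⟩
        obtain ⟨t', ht'⟩ := this
        rw [hg] at ht'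
        exact absurd (Option.some.inj ht') (by simp)
    | cons B t ih =>
      intro X l' hg hh
      have : H.Prec X B := (hprec X B).mp ⟨t, hg⟩
      obtain ⟨t2, ht2⟩ := this
      rw [hh] at ht2
      have hl' := Option.some.inj ht2
      subst hl'
      have h1 := boxCtx_parent hF2G hg
      have h2 := boxCtx_parent hF2H hh
      rw [ih B t2 h1 h2]
  intro X
  cases hg : G.boxCtx X with
  | none =>
    cases hh : H.boxCtx X with
    | none => rfl
    | some v =>
      have h1 : H.boxCount X ≠ 0 := by
        intro h0; rw [boxCtx_eq_none.mpr h0] at hh; exact nomatch hh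
      exact absurd (boxCtx_eq_none.mp hg) ((hcount X).mpr h1)
  | some v =>
    cases hh : H.boxCtx X with
    | none =>
      have h1 : G.boxCount X ≠ 0 := by
        intro h0; rw [boxCtx_eq_none.mpr h0] at hg; exact nomatch hg
      exact absurd (boxCtx_eq_none.mp hh) ((hcount X).mp h1)
    | some w => rw [key v X w hg hh]

end WkAux

set_option maxHeartbeats 1000000 in
/-- If `G` and `H` are compatible !-tensors (identical free
edge names, the same !-box names with identical immediate-nesting relation, and
equal contexts on all free edge names), then `Wk_A^K(G)` and `Wk_A^K(H)` are
compatible !-tensors. -/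
theorem wk_preserves_compatible {σ : Type} (G H K : Pretensor σ) (A : BoxName)
    (hG : Pretensor.IsTensorExpr G) (hH : Pretensor.IsTensorExpr H)
    (hwkG : Pretensor.IsTensorExpr (Pretensor.wk A K G))
    (hwkH : Pretensor.IsTensorExpr (Pretensor.wk A K H))
    (hcmp : Compatible G H) :
    Compatible (Pretensor.wk A K G) (Pretensor.wk A K H) := by
  classical
  obtain ⟨hc1, hc2, hc3, hc4⟩ := hcmp
  by_cases hn : G.boxCount A = 0
  · have hnH : H.boxCount A = 0 := by
      by_contra h0
      exact absurd hn ((hc2 A).mpr h0)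
    rw [WkAux.wk_eq_self A K G hn, WkAux.wk_eq_self A K H hnH]
    exact ⟨hc1, hc2, hc3, hc4⟩
  · have hG1 : G.boxCount A = 1 := le_antisymm (hG.2.1 A) (Nat.one_le_iff_ne_zero.mpr hn)
    have hnH' : H.boxCount A ≠ 0 := (hc2 A).mp hn
    have hH1 : H.boxCount A = 1 := le_antisymm (hH.2.1 A) (Nat.one_le_iff_ne_zero.mpr hnH')
    have hEdisG : ∀ d, G.edgeCount d = 0 ∨ K.edgeCount d = 0 := by
      intro d
      have h := hwkG.1 d
      rw [WkAux.edgeCount_wk A K G (hG.2.1 A) d, hG1, one_mul] at h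
      omega
    have hEdisH : ∀ d, H.edgeCount d = 0 ∨ K.edgeCount d = 0 := by
      intro d
      have h := hwkH.1 d
      rw [WkAux.edgeCount_wk A K H (hH.2.1 A) d, hH1, one_mul] at h
      omega
    have hBdisG : ∀ B, G.boxCount B = 0 ∨ K.boxCount B = 0 := by
      intro B
      have h := hwkG.2.1 B
      rw [WkAux.boxCount_wk A K G (hG.2.1 A) B, hG1, one_mul] at h
      omega
    have hBdisH : ∀ B, H.boxCount B = 0 ∨ K.boxCount B = 0 := by
      intro B
      have h := hwkH.2.1 B
      rw [WkAux.boxCount_wk A K H (hH.2.1 A) B, hH1, one_mul] at h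
      omega
    have hctx : ∀ X, G.boxCtx X = H.boxCtx X :=
      WkAux.boxCtx_congr hG.2.1 hH.2.1 hc2 hc3
    have occWG : ∀ d, (Pretensor.wk A K G).edgeCount d = G.edgeCount d + K.edgeCount d := by
      intro d; rw [WkAux.edgeCount_wk A K G (hG.2.1 A) d, hG1, one_mul]
    have occWH : ∀ d, (Pretensor.wk A K H).edgeCount d = H.edgeCount d + K.edgeCount d := by
      intro d; rw [WkAux.edgeCount_wk A K H (hH.2.1 A) d, hH1, one_mul]
    refine ⟨?_, ?_, ?_, ?_⟩
    · intro d
      have h1 := hc1 d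
      have h2 := hc1 d.partner
      simp only [Pretensor.freeDir, Pretensor.occursDir] at h1 h2 ⊢
      rw [WkAux.partner_partner] at h2
      rw [occWG d, occWG d.partner, occWH d, occWH d.partner]
      have e1 := hEdisG d; have e2 := hEdisG d.partner
      have e3 := hEdisH d; have e4 := hEdisH d.partner
      omega
    · intro B
      rw [WkAux.boxCount_wk A K G (hG.2.1 A) B, WkAux.boxCount_wk A K H (hH.2.1 A) B,
        hG1, hH1, one_mul]
      by_cases hgb : G.boxCount B = 0
      · have hhb : H.boxCount B = 0 := by
          by_contra h0; exact absurd hgb ((hc2 B).mpr h0)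
        rw [hgb, hhb]
      · have hhb := (hc2 B).mp hgb
        constructor <;> intro _ <;> omega
    · intro B C
      simp only [Pretensor.Prec]
      rw [WkAux.boxCtx_wk A K G hBdisG B, WkAux.boxCtx_wk A K H hBdisH B, hctx B, hctx A]
    · intro d hfree
      obtain ⟨hocc, hnocc⟩ := hfree
      simp only [Pretensor.occursDir] at hocc hnocc
      rw [occWG d] at hocc
      rw [occWG d.partner] at hnocc
      by_cases hgd : G.edgeCount d = 0
      · have hkd : K.edgeCount d ≠ 0 := by omega
        have hhd : H.edgeCount d = 0 := by
          rcases hEdisH d with h | h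
          · exact h
          · exact absurd h hkd
        simp only [Pretensor.ctxOf]
        rw [WkAux.ctx2_wk A K G hEdisG d, WkAux.ctx2_wk A K H hEdisH d,
          WkAux.ctx2_eq_none.mpr hgd, WkAux.ctx2_eq_none.mpr hhd, hctx A]
      · have hgp : G.edgeCount d.partner = 0 := by omega
        have hfdG : G.freeDir d := by
          refine ⟨hgd, ?_⟩
          simp only [Pretensor.occursDir, not_not, ne_eq]
          omega
        have hfdH := (hc1 d).mp hfdG
        have hhd : H.edgeCount d ≠ 0 := hfdH.1
        simp only [Pretensor.ctxOf]
        rw [WkAux.ctx2_wk A K G hEdisG d, WkAux.ctx2_wk A K H hEdisH d]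
        cases hg2 : G.ctx2 d with
        | none => exact absurd (WkAux.ctx2_eq_none.mp hg2) hgd
        | some p =>
          cases hh2 : H.ctx2 d with
          | none => exact absurd (WkAux.ctx2_eq_none.mp hh2) hhd
          | some q =>
            have hc := hc4 d hfdG
            simp only [Pretensor.ctxOf, hg2, hh2] at hc
            simpa [Option.orElse] using hc

end BangTensor
end
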